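/- arXiv:2011.02015 — 3 statements merged into one kernel-verified Lean document; each statement's English description precedes it below -/
import Mathlib

section
/- Let P be a pseudo-tree, i.e., a finite connected simple graph containing exactly one cycle (equivalently, a connected graph with |E(P)| = |V(P)|). Then the barycentric subdivision B(P) of P has exactly two perfect matchings; equivalently, there are exactly two matchings on the face poset F(P) that cover every vertex of F(P). -/
/-- The arc relation of the face poset of a finite abstract simplicial complex `X`
(given as a finite family of finite faces): an arc from `σ` down to `τ` whenever
`τ` is a codimension-one face of `σ`. -/
def FaceArc {V : Type*} (X : Finset (Finset V)) (σ τ : Finset V) : Prop :=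
  σ ∈ X ∧ τ ∈ X ∧ τ ⊂ σ ∧ τ.card + 1 = σ.card

/-- The arc relation of the face poset of a simple graph `G`, regarded as a
1-dimensional simplicial complex: an arc from each edge-face `{u, v}` down to
each of its endpoint vertex-faces. -/
def GraphArc {V : Type*} [DecidableEq V] (G : SimpleGraph V) (σ τ : Finset V) : Prop :=
  ∃ u v : V, G.Adj u v ∧ σ = {u, v} ∧ (τ = {u} ∨ τ = {v})

/-- A matching on the digraph with arc relation `A`: a finite set of arcs,
no two of which share an endpoint. -/
def IsMatching {α : Type*} (A : α → α → Prop) (m : Finset (α × α)) : Prop :=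
  (∀ p ∈ m, A p.1 p.2) ∧
    ∀ p ∈ m, ∀ q ∈ m, p ≠ q →
      p.1 ≠ q.1 ∧ p.1 ≠ q.2 ∧ p.2 ≠ q.1 ∧ p.2 ≠ q.2

/-- The arc relation of the digraph obtained from the digraph with arc relation `A`
by reversing the arcs belonging to `m`. -/
def MStep {α : Type*} (A : α → α → Prop) (m : Finset (α × α)) (a b : α) : Prop :=
  (A a b ∧ (a, b) ∉ m) ∨ (A b a ∧ (b, a) ∈ m)

/-- `IsCycleList R l` says the nonempty list `l` of pairwise distinct vertices is a
directed cycle of the digraph with arc relation `R` (consecutive steps, closing up). -/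
def IsCycleList {α : Type*} (R : α → α → Prop) : List α → Prop
  | [] => False
  | a :: l => (a :: l).Nodup ∧ List.Chain R a (l ++ [a])

/-- The set of oriented cycles induced by the matching `m` on the digraph with arc
relation `A` (as lists of vertices; rotated lists represent the same cycle). -/
def cyclesOf {α : Type*} (A : α → α → Prop) (m : Finset (α × α)) : Set (List α) :=
  {l | IsCycleList (MStep A m) l}

/-- `numCycles A m` is `J(m)`, the number of oriented cycles induced by `m`
(cycle lists counted up to rotation). -/
noncomputable def numCycles {α : Type*} (A : α → α → Prop) (m : Finset (α × α)) : ℕ :=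
  (Quotient.mk (List.IsRotated.setoid α) '' cyclesOf A m).ncard

set_option linter.unusedSectionVars false

open Finset

section
variable {V : Type*} [Fintype V] [DecidableEq V] (P : SimpleGraph V) [DecidableRel P.Adj]

def Valid (h : V → V) : Prop := (∀ v, P.Adj v (h v)) ∧ ∀ v, h (h v) ≠ v

variable {P}

lemma walk_closed {S : Set V} (hcl : ∀ x ∈ S, ∀ y, P.Adj x y → y ∈ S) :
    ∀ {a b : V}, P.Walk a b → a ∈ S → b ∈ S := by
  intro a b p
  induction p with
  | nil => exact id
  | cons h q ih => exact fun ha => ih (hcl _ ha _ h)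

variable (P)

noncomputable def nxt (p c : V) : V :=
  if h : ((P.neighborFinset c).erase p).Nonempty then h.choose else p

variable {P}

lemma nxt_spec {p c : V} (h : P.Adj p c) (hdeg : P.degree c = 2) :
    P.Adj c (nxt P p c) ∧ nxt P p c ≠ p := by
  have hp : p ∈ P.neighborFinset c := (P.mem_neighborFinset c p).2 h.symm
  have hcard : ((P.neighborFinset c).erase p).card = 1 := by
    rw [Finset.card_erase_of_mem hp]; rw [show (P.neighborFinset c).card = 2 from hdeg]
  have hne : ((P.neighborFinset c).erase p).Nonempty := by
    rw [← Finset.card_pos, hcard]; norm_num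
  have hmem : nxt P p c ∈ (P.neighborFinset c).erase p := by
    rw [nxt, dif_pos hne]; exact hne.choose_spec
  exact ⟨(P.mem_neighborFinset c _).1 (Finset.mem_of_mem_erase hmem),
    Finset.ne_of_mem_erase hmem⟩

lemma nxt_uniq {p c z : V} (h : P.Adj p c) (hdeg : P.degree c = 2)
    (hz : P.Adj c z) (hzp : z ≠ p) : z = nxt P p c := by
  have hp : p ∈ P.neighborFinset c := (P.mem_neighborFinset c p).2 h.symm
  have hcard : ((P.neighborFinset c).erase p).card = 1 := by
    rw [Finset.card_erase_of_mem hp]; rw [show (P.neighborFinset c).card = 2 from hdeg]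
  obtain ⟨w, hw⟩ := Finset.card_eq_one.1 hcard
  have h1 : z ∈ (P.neighborFinset c).erase p :=
    Finset.mem_erase.2 ⟨hzp, (P.mem_neighborFinset c z).2 hz⟩
  have h2 : nxt P p c ∈ (P.neighborFinset c).erase p := by
    have hne : ((P.neighborFinset c).erase p).Nonempty := ⟨z, h1⟩
    rw [nxt, dif_pos hne]; exact hne.choose_spec
  rw [hw, Finset.mem_singleton] at h1 h2
  rw [h1, h2]

variable (P)

noncomputable def seq (v0 a : V) : ℕ → V
  | 0 => v0
  | 1 => a
  | (n+2) => nxt P (seq v0 a n) (seq v0 a (n+1))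

variable {P}

lemma seq_adj (hdeg : ∀ v, P.degree v = 2) {v0 a : V} (h0 : P.Adj v0 a) :
    ∀ k, P.Adj (seq P v0 a k) (seq P v0 a (k+1)) := by
  intro k
  induction k using Nat.strong_induction_on with
  | _ k ih =>
    match k with
    | 0 => exact h0
    | (n+1) =>
      have := ih n (by omega)
      exact (nxt_spec this (hdeg _)).1

lemma seq_ne (hdeg : ∀ v, P.degree v = 2) {v0 a : V} (h0 : P.Adj v0 a) :
    ∀ k, seq P v0 a (k+2) ≠ seq P v0 a k :=
  fun k => (nxt_spec (seq_adj hdeg h0 k) (hdeg _)).2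

lemma two_regular (hconn : P.Connected) (hdeg : ∀ v, P.degree v = 2) :
    ∃ h₁ h₂ : V → V, h₁ ≠ h₂ ∧ {h : V → V | Valid P h} = {h₁, h₂} := by
  classical
  have hne : Nonempty V := hconn.nonempty
  obtain ⟨v0⟩ := hne
  have hnbne : (P.neighborFinset v0).Nonempty := by
    rw [← Finset.card_pos, show (P.neighborFinset v0).card = 2 from hdeg v0]; norm_num
  obtain ⟨a, ha⟩ := hnbne
  have h0 : P.Adj v0 a := (P.mem_neighborFinset v0 a).1 ha
  set x : ℕ → V := seq P v0 a with hx
  have hadj : ∀ k, P.Adj (x k) (x (k+1)) := seq_adj hdeg h0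
  have hsne : ∀ k, x (k+2) ≠ x k := seq_ne hdeg h0
  -- neighbor structure
  have nbrA : ∀ k, P.neighborFinset (x (k+1)) = {x k, x (k+2)} := by
    intro k
    refine (Finset.eq_of_subset_of_card_le ?_ ?_).symm
    · intro z hz
      simp only [Finset.mem_insert, Finset.mem_singleton] at hz
      rcases hz with rfl | rfl
      · exact (P.mem_neighborFinset _ _).2 (hadj k).symm
      · exact (P.mem_neighborFinset _ _).2 (hadj (k+1))
    · rw [show (P.neighborFinset (x (k+1))).card = 2 from hdeg _,
        Finset.card_pair (fun e => hsne k e.symm)]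
  -- first repetition
  have hrep : ∃ j, ∃ i, i < j ∧ x i = x j := by
    obtain ⟨i, j, hij, he⟩ := Finite.exists_ne_map_eq_of_infinite x
    rcases lt_or_gt_of_ne hij with h | h
    · exact ⟨j, i, h, he⟩
    · exact ⟨i, j, h, he.symm⟩
  obtain ⟨j, ⟨i, hij, hxij⟩, hmin⟩ :
      ∃ j, (∃ i, i < j ∧ x i = x j) ∧ ∀ l, l < j → ¬ (∃ i, i < l ∧ x i = x l) :=
    ⟨Nat.find hrep, Nat.find_spec hrep, fun l hl => Nat.find_min hrep hl⟩
  have hdist : ∀ k l, k < j → l < j → x k = x l → k = l := by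
    intro k l hk hl he
    by_contra hkl
    rcases lt_or_gt_of_ne hkl with h | h
    · exact hmin l hl ⟨k, h, he⟩
    · exact hmin k hk ⟨l, h, he.symm⟩
  have hj3 : 3 ≤ j := by
    by_contra hc
    push_neg at hc
    have hj1 : j ≠ 0 := by omega
    have hj2 : j ≠ 1 := by
      intro e
      rw [e] at hij hxij
      have : i = 0 := by omega
      rw [this] at hxij
      exact (hadj 0).ne hxij
    have hj4 : j ≠ 2 := by
      intro e
      rw [e] at hij hxij
      match i, hij with
      | 0, _ => exact hsne 0 hxij.symm
      | 1, _ => exact (hadj 1).ne hxij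
    omega
  have hi0 : i = 0 := by
    by_contra hi
    obtain ⟨t, rfl⟩ : ∃ t, i = t + 1 := ⟨i - 1, by omega⟩
    have hij1 : t + 1 + 1 < j := by
      rcases Nat.lt_or_ge (t+1+1) j with h | h
      · exact h
      · exfalso
        apply (hadj (t+1)).ne
        rw [show t + 1 + 1 = j by omega]
        exact hxij
    have hadjj : P.Adj (x (j-1)) (x j) := by
      have := hadj (j-1); rwa [show j - 1 + 1 = j by omega] at this
    have hmem : x (j - 1) ∈ P.neighborFinset (x (t+1)) := by
      rw [hxij]
      exact (P.mem_neighborFinset _ _).2 hadjj.symm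
    rw [nbrA t, Finset.mem_insert, Finset.mem_singleton] at hmem
    rcases hmem with h | h
    · have := hdist _ _ (by omega) (by omega) h; omega
    · rcases Nat.lt_or_ge (t+2) (j-1) with hlt | hge
      · have := hdist _ _ (by omega) (by omega) h; omega
      · apply hsne (t+1)
        rw [show t + 1 + 2 = j by omega]
        exact hxij.symm
  subst hi0
  -- x j = x 0
  have hj0 : x j = x 0 := hxij.symm
  have hadjj : P.Adj (x (j-1)) (x 0) := by
    have := hadj (j-1); rwa [show j - 1 + 1 = j by omega, hj0] at this
  have nbr0 : P.neighborFinset (x 0) = {x 1, x (j-1)} := by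
    refine (Finset.eq_of_subset_of_card_le ?_ ?_).symm
    · intro z hz
      simp only [Finset.mem_insert, Finset.mem_singleton] at hz
      rcases hz with rfl | rfl
      · exact (P.mem_neighborFinset _ _).2 (hadj 0)
      · exact (P.mem_neighborFinset _ _).2 hadjj.symm
    · rw [show (P.neighborFinset (x 0)).card = 2 from hdeg _,
        Finset.card_pair (fun e => by have := hdist _ _ (by omega) (by omega) e; omega)]
  -- surjectivity
  have hsurj : ∀ w : V, ∃ k, k < j ∧ x k = w := by
    have hcl : ∀ w ∈ {w : V | ∃ k, k < j ∧ x k = w}, ∀ y, P.Adj w y →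
        y ∈ {w : V | ∃ k, k < j ∧ x k = w} := by
      rintro w ⟨k, hk, rfl⟩ y hy
      match k, hk with
      | 0, _ =>
        have hmy : y ∈ P.neighborFinset (x 0) := (P.mem_neighborFinset _ _).2 hy
        rw [nbr0, Finset.mem_insert, Finset.mem_singleton] at hmy
        rcases hmy with rfl | rfl
        · exact ⟨1, by omega, rfl⟩
        · exact ⟨j-1, by omega, rfl⟩
      | (t+1), hk =>
        have hmy : y ∈ P.neighborFinset (x (t+1)) := (P.mem_neighborFinset _ _).2 hy
        rw [nbrA t, Finset.mem_insert, Finset.mem_singleton] at hmy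
        rcases hmy with rfl | rfl
        · exact ⟨t, by omega, rfl⟩
        · rcases Nat.lt_or_ge (t+2) j with hlt | hge
          · exact ⟨t+2, hlt, rfl⟩
          · exact ⟨0, by omega, by rw [← hj0, show t + 2 = j by omega]⟩
    intro w
    obtain ⟨p⟩ := hconn.preconnected (x 0) w
    exact walk_closed hcl p ⟨0, by omega, rfl⟩
  -- index function
  have hidxe : ∀ w : V, ∃ k, x k = w := fun w => (hsurj w).elim fun k hk => ⟨k, hk.2⟩
  set idx : V → ℕ := fun w => Nat.find (hidxe w) with hidx
  have idx_spec : ∀ w, x (idx w) = w := fun w => Nat.find_spec (hidxe w)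
  have idx_lt : ∀ w, idx w < j := by
    intro w
    obtain ⟨k, hk, he⟩ := hsurj w
    exact lt_of_le_of_lt (Nat.find_min' (hidxe w) he) hk
  have idx_x : ∀ k, k < j → idx (x k) = k := by
    intro k hk
    exact hdist _ _ (idx_lt _) hk (idx_spec (x k))
  -- the two orientations
  have hg0nbr : ∀ g : V → V, Valid P g → g (x 0) = x 1 ∨ g (x 0) = x (j-1) := by
    intro g hg
    have h1 : g (x 0) ∈ P.neighborFinset (x 0) := (P.mem_neighborFinset _ _).2 (hg.1 _)
    rw [nbr0, Finset.mem_insert, Finset.mem_singleton] at h1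
    exact h1
  have hpval : Valid P (fun w => x (idx w + 1)) := by
    constructor
    · intro w
      obtain ⟨k, hk, rfl⟩ := hsurj w
      show P.Adj (x k) (x (idx (x k) + 1))
      rw [idx_x k hk]
      exact hadj k
    · intro w
      obtain ⟨k, hk, rfl⟩ := hsurj w
      show x (idx (x (idx (x k) + 1)) + 1) ≠ x k
      rw [idx_x k hk]
      rcases Nat.lt_or_ge (k + 1) j with h1 | h1
      · rw [idx_x _ h1]
        exact hsne k
      · rw [show k + 1 = j by omega, hj0, idx_x 0 (by omega)]
        intro e
        have := hdist _ _ (by omega) hk e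
        omega
  have hmval : Valid P (fun w => if idx w = 0 then x (j-1) else x (idx w - 1)) := by
    constructor
    · intro w
      obtain ⟨k, hk, rfl⟩ := hsurj w
      show P.Adj (x k) (if idx (x k) = 0 then x (j-1) else x (idx (x k) - 1))
      rw [idx_x k hk]
      by_cases h0 : k = 0
      · subst h0
        rw [if_pos rfl]
        exact hadjj.symm
      · rw [if_neg h0]
        have := (hadj (k-1)).symm
        rwa [show k - 1 + 1 = k by omega] at this
    · intro w
      obtain ⟨k, hk, rfl⟩ := hsurj w
      show (if idx (if idx (x k) = 0 then x (j-1) else x (idx (x k) - 1)) = 0 then x (j-1)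
        else x (idx (if idx (x k) = 0 then x (j-1) else x (idx (x k) - 1)) - 1)) ≠ x k
      rw [idx_x k hk]
      by_cases h0 : k = 0
      · subst h0
        rw [if_pos rfl, idx_x _ (by omega), if_neg (by omega : ¬ (j - 1 = 0))]
        intro e
        have := hdist _ _ (by omega) hk e
        omega
      · rw [if_neg h0, idx_x (k-1) (by omega)]
        by_cases h1 : k = 1
        · subst h1
          rw [if_pos rfl]
          intro e
          have := hdist _ _ (by omega) hk e
          omega
        · rw [if_neg (by omega : ¬ (k - 1 = 0))]
          intro e
          have := hdist _ _ (by omega) hk e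
          omega
  have key : ∀ g : V → V, Valid P g →
      (∀ w, g w = x (idx w + 1)) ∨
        (∀ w, g w = if idx w = 0 then x (j-1) else x (idx w - 1)) := by
    intro g hg
    rcases hg0nbr g hg with hg0 | hg0
    · left
      have C : ∀ k, k < j → g (x k) = x (k+1) := by
        intro k
        induction k with
        | zero => exact fun _ => hg0
        | succ t ih =>
          intro hk
          have ht : g (x t) = x (t+1) := ih (by omega)
          have h1 : g (x (t+1)) ∈ P.neighborFinset (x (t+1)) :=
            (P.mem_neighborFinset _ _).2 (hg.1 _)
          rw [nbrA t, Finset.mem_insert, Finset.mem_singleton] at h1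
          rcases h1 with h1 | h1
          · exfalso
            have h2 := hg.2 (x t)
            rw [ht] at h2
            exact h2 h1
          · exact h1
      intro w
      conv_lhs => rw [← idx_spec w]
      exact C (idx w) (idx_lt w)
    · right
      have D : ∀ t k, k + 1 < j → j - 2 - k = t → g (x (k+1)) = x k := by
        intro t
        induction t with
        | zero =>
          intro k hk1 hk2
          have h2 := hg.2 (x 0)
          rw [hg0] at h2
          have h1 : g (x (k+1)) ∈ P.neighborFinset (x (k+1)) :=
            (P.mem_neighborFinset _ _).2 (hg.1 _)
          rw [nbrA k, Finset.mem_insert, Finset.mem_singleton] at h1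
          rcases h1 with h1 | h1
          · exact h1
          · exfalso
            rw [show k + 2 = j by omega, hj0, show k + 1 = j - 1 by omega] at h1
            exact h2 h1
        | succ t ih =>
          intro k hk1 hk2
          have hnext : g (x (k+2)) = x (k+1) := by
            have := ih (k+1) (by omega) (by omega)
            rwa [show k + 1 + 1 = k + 2 by omega] at this
          have h2 := hg.2 (x (k+2))
          rw [hnext] at h2
          have h1 : g (x (k+1)) ∈ P.neighborFinset (x (k+1)) :=
            (P.mem_neighborFinset _ _).2 (hg.1 _)
          rw [nbrA k, Finset.mem_insert, Finset.mem_singleton] at h1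
          rcases h1 with h1 | h1
          · exact h1
          · exact absurd h1 h2
      intro w
      by_cases h0 : idx w = 0
      · rw [if_pos h0]
        conv_lhs => rw [← idx_spec w, h0]
        exact hg0
      · rw [if_neg h0]
        conv_lhs => rw [← idx_spec w, show idx w = (idx w - 1) + 1 by omega]
        exact D (j - 2 - (idx w - 1)) (idx w - 1) (by have := idx_lt w; omega) rfl
  refine ⟨fun w => x (idx w + 1), fun w => if idx w = 0 then x (j-1) else x (idx w - 1),
    ?_, ?_⟩
  · intro e
    have he := congrFun e (x 0)
    simp only [idx_x 0 (by omega), if_pos rfl] at he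
    have := hdist _ _ (by omega) (by omega) he
    omega
  · ext g
    simp only [Set.mem_setOf_eq, Set.mem_insert_iff, Set.mem_singleton_iff]
    constructor
    · intro hg
      rcases key g hg with h | h
      · exact Or.inl (funext h)
      · exact Or.inr (funext h)
    · rintro (rfl | rfl)
      · exact hpval
      · exact hmval

lemma nbhd_leaf {v u : V} (hdeg : P.degree v = 1) (hu : P.Adj v u) :
    P.neighborFinset v = {u} := by
  have hm : u ∈ P.neighborFinset v := (P.mem_neighborFinset _ _).2 hu
  obtain ⟨w, hw⟩ := Finset.card_eq_one.1 (show (P.neighborFinset v).card = 1 from hdeg)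
  rw [hw, Finset.mem_singleton] at hm
  rw [hw, hm]

lemma adj_leaf_eq {v u : V} (hdeg : P.degree v = 1) (hu : P.Adj v u) {x : V}
    (hx : P.Adj v x) : x = u := by
  have := (P.mem_neighborFinset _ _).2 hx
  rw [nbhd_leaf hdeg hu, Finset.mem_singleton] at this
  exact this

lemma leaf_card_edges {v u : V} (hdeg : P.degree v = 1) (hu : P.Adj v u)
    [DecidableRel (P.comap (Subtype.val : {x : V // x ≠ v} → V)).Adj] :
    (P.comap (Subtype.val : {x : V // x ≠ v} → V)).edgeFinset.card + 1
      = P.edgeFinset.card := by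
  classical
  have himg : (P.comap (Subtype.val : {x : V // x ≠ v} → V)).edgeFinset.image
      (Sym2.map Subtype.val) = P.edgeFinset.erase s(v,u) := by
    ext e
    rw [Finset.mem_image]
    constructor
    · rintro ⟨e', he', rfl⟩
      revert he'
      induction e' using Sym2.ind with
      | _ a b =>
        intro he'
        have hadj' : (P.comap (Subtype.val : {x : V // x ≠ v} → V)).Adj a b :=
          (SimpleGraph.mem_edgeSet _).1 (SimpleGraph.mem_edgeFinset.1 he')
        have hadj : P.Adj a.1 b.1 := hadj'
        rw [Sym2.map_pair_eq, Finset.mem_erase]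
        refine ⟨?_, SimpleGraph.mem_edgeFinset.2 ((SimpleGraph.mem_edgeSet _).2 hadj)⟩
        intro he
        rw [Sym2.eq_iff] at he
        rcases he with ⟨h1, -⟩ | ⟨-, h2⟩
        · exact a.2 h1
        · exact b.2 h2
    · intro he
      rw [Finset.mem_erase] at he
      obtain ⟨hne, hmem⟩ := he
      revert hne hmem
      induction e using Sym2.ind with
      | _ a b =>
        intro hne hmem
        have hadj : P.Adj a b := (SimpleGraph.mem_edgeSet _).1
          (SimpleGraph.mem_edgeFinset.1 hmem)
        have hav : a ≠ v := by
          rintro rfl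
          exact hne (by rw [adj_leaf_eq hdeg hu hadj])
        have hbv : b ≠ v := by
          rintro rfl
          have h2 : a = u := adj_leaf_eq hdeg hu hadj.symm
          exact hne (by rw [h2, Sym2.eq_swap])
        refine ⟨s(⟨a, hav⟩, ⟨b, hbv⟩), ?_, by rw [Sym2.map_pair_eq]⟩
        exact SimpleGraph.mem_edgeFinset.2 ((SimpleGraph.mem_edgeSet _).2 hadj)
  have hcard1 : (P.comap (Subtype.val : {x : V // x ≠ v} → V)).edgeFinset.card
      = (P.edgeFinset.erase s(v,u)).card := by
    rw [← himg, Finset.card_image_of_injective _ (Sym2.map.injective Subtype.val_injective)]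
  have hmem : s(v,u) ∈ P.edgeFinset := SimpleGraph.mem_edgeFinset.2 ((SimpleGraph.mem_edgeSet _).2 hu)
  have hpos : 0 < P.edgeFinset.card := Finset.card_pos.2 ⟨_, hmem⟩
  rw [hcard1, Finset.card_erase_of_mem hmem]
  omega

lemma leaf_connected {v u : V} (hconn : P.Connected) (hdeg : P.degree v = 1)
    (hu : P.Adj v u) : (P.comap (Subtype.val : {x : V // x ≠ v} → V)).Connected := by
  have key : ∀ n (a b : V) (ha : a ≠ v) (hb : b ≠ v) (p : P.Walk a b), p.length ≤ n →
      (P.comap (Subtype.val : {x : V // x ≠ v} → V)).Reachable ⟨a, ha⟩ ⟨b, hb⟩ := by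
    intro n
    induction n with
    | zero =>
      intro a b ha hb p hp
      cases p with
      | nil => exact SimpleGraph.Reachable.refl _
      | cons h q =>
        rw [SimpleGraph.Walk.length_cons] at hp
        omega
    | succ n ihn =>
      intro a b ha hb p hp
      cases p with
      | nil => exact SimpleGraph.Reachable.refl _
      | @cons _ c _ h q =>
        rw [SimpleGraph.Walk.length_cons] at hp
        by_cases hc : c = v
        · cases q with
          | nil => exact absurd hc hb
          | @cons _ d _ h2 q2 =>
            rw [SimpleGraph.Walk.length_cons] at hp
            have hdu : d = u := adj_leaf_eq hdeg hu (hc ▸ h2)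
            have hau : a = u := adj_leaf_eq hdeg hu (hc ▸ h.symm)
            have hdv : d ≠ v := by rw [hdu]; exact hu.ne'
            have hr := ihn d b hdv hb q2 (by omega)
            have hae : (⟨a, ha⟩ : {x : V // x ≠ v}) = ⟨d, hdv⟩ :=
              Subtype.ext (hau.trans hdu.symm)
            rw [hae]
            exact hr
        · have h' : (P.comap (Subtype.val : {x : V // x ≠ v} → V)).Adj ⟨a, ha⟩ ⟨c, hc⟩ := h
          exact h'.reachable.trans (ihn c b hc hb q (by omega))
  rw [SimpleGraph.connected_iff]
  refine ⟨?_, ⟨⟨u, hu.ne'⟩⟩⟩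
  rintro ⟨a, ha⟩ ⟨b, hb⟩
  obtain ⟨p⟩ := hconn.preconnected a b
  exact key p.length a b ha hb p le_rfl

lemma leaf_ncard {v u : V} (hdeg : P.degree v = 1) (hu : P.Adj v u) :
    {h : V → V | Valid P h}.ncard
      = {h : {x : V // x ≠ v} → {x : V // x ≠ v} |
          Valid (P.comap Subtype.val) h}.ncard := by
  rw [← Nat.card_coe_set_eq, ← Nat.card_coe_set_eq]
  apply Nat.card_congr
  have hnotto : ∀ h : V → V, Valid P h → ∀ x : V, x ≠ v → h x ≠ v := by
    intro h hh x hx hxv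
    have hxu : x = u := adj_leaf_eq hdeg hu (hxv ▸ hh.1 x).symm
    subst hxu
    apply hh.2 v
    rw [adj_leaf_eq hdeg hu (hh.1 v), hxv]
  refine ⟨fun hs => ⟨fun a => ⟨hs.1 a.1, hnotto hs.1 hs.2 a.1 a.2⟩, ?_, ?_⟩,
          fun hs => ⟨fun x => if hx : x = v then u else (hs.1 ⟨x, hx⟩).1, ?_, ?_⟩, ?_, ?_⟩
  · intro a
    exact hs.2.1 a.1
  · intro a e
    exact hs.2.2 a.1 (congrArg Subtype.val e)
  · intro x
    dsimp only
    by_cases hx : x = v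
    · rw [dif_pos hx, hx]
      exact hu
    · rw [dif_neg hx]
      exact hs.2.1 ⟨x, hx⟩
  · intro x
    dsimp only
    by_cases hx : x = v
    · rw [dif_pos hx, dif_neg hu.ne', hx]
      exact (hs.1 ⟨u, hu.ne'⟩).2
    · rw [dif_neg hx, dif_neg (hs.1 ⟨x, hx⟩).2]
      intro e
      apply hs.2.2 ⟨x, hx⟩
      apply Subtype.ext
      exact e
  · intro hs
    apply Subtype.ext
    funext x
    dsimp only
    by_cases hx : x = v
    · rw [dif_pos hx, hx]
      exact (adj_leaf_eq hdeg hu (hs.2.1 v)).symm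
    · rw [dif_neg hx]
  · intro hs
    apply Subtype.ext
    funext a
    apply Subtype.ext
    dsimp only
    rw [dif_neg a.2]

end

universe u

lemma core : ∀ (n : ℕ) (V : Type u) (instF : Fintype V) (instD : DecidableEq V)
    (P : SimpleGraph V) (instR : DecidableRel P.Adj),
    Fintype.card V = n → P.Connected → P.edgeFinset.card = Fintype.card V →
    {h : V → V | Valid P h}.ncard = 2 := by
  intro n
  induction n using Nat.strong_induction_on with
  | _ n ih =>
    intro V instF instD P instR hn hconn hcard
    by_cases hleaf : ∃ v, P.degree v = 1
    · obtain ⟨v, hv⟩ := hleaf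
      have hnb : (P.neighborFinset v).Nonempty := by
        rw [← Finset.card_pos, (show (P.neighborFinset v).card = 1 from hv)]
        norm_num
      obtain ⟨u, hu'⟩ := hnb
      have hu : P.Adj v u := (P.mem_neighborFinset _ _).1 hu'
      letI instR' : DecidableRel (P.comap (Subtype.val : {x : V // x ≠ v} → V)).Adj :=
        fun a b => inferInstanceAs (Decidable (P.Adj a.1 b.1))
      have hn1 : 0 < n := by
        rw [← hn]
        exact Fintype.card_pos_iff.2 ⟨v⟩
      have hcV : Fintype.card {x : V // x ≠ v} = n - 1 := by
        have h2 := Fintype.card_subtype_compl (fun x : V => x = v)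
        rw [Fintype.card_subtype_eq, hn] at h2
        exact h2
      have hE := leaf_card_edges hv hu
      have hC := leaf_connected hconn hv hu
      rw [leaf_ncard hv hu]
      exact ih (n-1) (by omega) {x : V // x ≠ v} inferInstance
        (Subtype.instDecidableEq) _ instR' hcV hC
        (by rw [hcV]; omega)
    · push_neg at hleaf
      have hnonempty : Nonempty V := hconn.nonempty
      have hEpos : 0 < P.edgeFinset.card := by
        rw [hcard]
        exact Fintype.card_pos_iff.2 hnonempty
      have hV2 : 1 < Fintype.card V := by
        obtain ⟨e, he⟩ := Finset.card_pos.1 hEpos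
        revert he
        induction e using Sym2.ind with
        | _ a b =>
          intro he
          have hadj : P.Adj a b := (SimpleGraph.mem_edgeSet _).1
            (SimpleGraph.mem_edgeFinset.1 he)
          exact Fintype.one_lt_card_iff.2 ⟨a, b, hadj.ne⟩
      have hdegpos : ∀ w, 0 < P.degree w := by
        intro w
        haveI : Nontrivial V := Fintype.one_lt_card_iff_nontrivial.1 hV2
        obtain ⟨z, hz⟩ := exists_ne w
        obtain ⟨p⟩ := hconn.preconnected w z
        cases p with
        | nil => exact absurd rfl hz.symm
        | cons h q =>
          rw [SimpleGraph.degree_pos_iff_exists_adj]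
          exact ⟨_, h⟩
      have hdeg2 : ∀ w, 2 ≤ P.degree w := by
        intro w
        have h1 := hdegpos w
        have h2 := hleaf w
        omega
      have hdeg : ∀ w, P.degree w = 2 := by
        intro w
        by_contra hw
        have h3 : 2 < P.degree w := by
          have := hdeg2 w
          omega
        have hlt : ∑ _v : V, 2 < ∑ v : V, P.degree v :=
          Finset.sum_lt_sum (fun i _ => hdeg2 i) ⟨w, Finset.mem_univ w, h3⟩
        rw [P.sum_degrees_eq_twice_card_edges, Finset.sum_const, Finset.card_univ,
          smul_eq_mul, hcard] at hlt
        omega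
      obtain ⟨h₁, h₂, hne, heq⟩ := two_regular hconn hdeg
      rw [heq]
      exact Set.ncard_pair hne

section
variable {V : Type*} [Fintype V] [DecidableEq V] (P : SimpleGraph V) [DecidableRel P.Adj]


/-- the matching associated to a valid successor function -/
def mOf (h : V → V) : Finset (Finset V × Finset V) :=
  Finset.univ.image (fun v => (({v, h v} : Finset V), ({v} : Finset V)))

variable {P}

lemma valid_ne {h : V → V} (hh : Valid P h) (v : V) : h v ≠ v := (hh.1 v).ne'

lemma valid_pair_inj {h : V → V} (hh : Valid P h) {u v : V} 
    (e : ({u, h u} : Finset V) = {v, h v}) : u = v := by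
  by_contra huv
  have hu : u ∈ ({v, h v} : Finset V) := by rw [← e]; simp
  simp only [mem_insert, mem_singleton] at hu
  rcases hu with rfl | hu
  · exact huv rfl
  · have hv : v ∈ ({u, h u} : Finset V) := by rw [e]; simp
    simp only [mem_insert, mem_singleton] at hv
    rcases hv with rfl | hv
    · exact huv rfl
    · exact hh.2 u (by rw [← hv, ← hu])

lemma valid_surj {h : V → V} (hh : Valid P h) (hcard : P.edgeFinset.card = Fintype.card V)
    {x y : V} (hxy : P.Adj x y) : ∃ v, ({v, h v} : Finset V) = {x, y} := by
  classical
  have hinj : Function.Injective (fun v => s(v, h v)) := by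
    intro u v huv
    rw [Sym2.eq_iff] at huv
    rcases huv with ⟨rfl, -⟩ | ⟨h1, h2⟩
    · rfl
    · exact absurd (h1 ▸ h2) (hh.2 v)
  have hsub : Finset.univ.image (fun v => s(v, h v)) ⊆ P.edgeFinset := by
    intro e he
    simp only [mem_image] at he
    obtain ⟨v, -, rfl⟩ := he
    exact SimpleGraph.mem_edgeFinset.2 (hh.1 v)
  have hc : (Finset.univ.image (fun v => s(v, h v))).card = P.edgeFinset.card := by
    rw [Finset.card_image_of_injective _ hinj, Finset.card_univ, hcard]
  have heq : Finset.univ.image (fun v => s(v, h v)) = P.edgeFinset :=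
    Finset.eq_of_subset_of_card_le hsub (le_of_eq hc.symm)
  have : s(x, y) ∈ Finset.univ.image (fun v => s(v, h v)) := by
    rw [heq]; exact SimpleGraph.mem_edgeFinset.2 hxy
  simp only [mem_image] at this
  obtain ⟨v, -, hv⟩ := this
  rw [Sym2.eq_iff] at hv
  rcases hv with ⟨h1, h2⟩ | ⟨h1, h2⟩
  · exact ⟨v, by rw [h2, h1]⟩
  · exact ⟨v, by rw [h2, h1, Finset.pair_comm]⟩

lemma mOf_mem {h : V → V} : ∀ p ∈ mOf h, ∃ v, p = (({v, h v} : Finset V), ({v} : Finset V)) := by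
  intro p hp
  simp only [mOf, mem_image, mem_univ, true_and] at hp
  obtain ⟨v, hv⟩ := hp
  exact ⟨v, hv.symm⟩

lemma mOf_good {h : V → V} (hh : Valid P h) (hcard : P.edgeFinset.card = Fintype.card V) :
    IsMatching (GraphArc P) (mOf h) ∧
      ∀ σ : Finset V, ((∃ x : V, σ = {x}) ∨ (∃ x y : V, P.Adj x y ∧ σ = {x, y})) →
        ∃ p ∈ mOf h, p.1 = σ ∨ p.2 = σ := by
  have hcard2 : ∀ v, ({v, h v} : Finset V).card = 2 := fun v =>
    Finset.card_pair (valid_ne hh v).symm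
  constructor
  · constructor
    · intro p hp
      obtain ⟨v, rfl⟩ := mOf_mem p hp
      exact ⟨v, h v, hh.1 v, rfl, Or.inl rfl⟩
    · intro p hp q hq hpq
      obtain ⟨u, rfl⟩ := mOf_mem p hp
      obtain ⟨v, rfl⟩ := mOf_mem q hq
      have huv : u ≠ v := fun e => hpq (by rw [e])
      refine ⟨fun e => huv (valid_pair_inj hh e), ?_, ?_, ?_⟩
      · intro e; apply_fun Finset.card at e; rw [hcard2, Finset.card_singleton] at e; omega
      · intro e; apply_fun Finset.card at e; rw [hcard2, Finset.card_singleton] at e; omega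
      · intro e; exact huv (Finset.singleton_injective e)
  · rintro σ (⟨x, rfl⟩ | ⟨x, y, hxy, rfl⟩)
    · refine ⟨(({x, h x} : Finset V), ({x} : Finset V)), ?_, Or.inr rfl⟩
      simp [mOf]
    · obtain ⟨v, hv⟩ := valid_surj hh hcard hxy
      refine ⟨(({v, h v} : Finset V), ({v} : Finset V)), ?_, Or.inl hv⟩
      simp [mOf]

lemma mem_good_form {m : Finset (Finset V × Finset V)}
    (hm : IsMatching (GraphArc P) m) {p : Finset V × Finset V} (hp : p ∈ m) :
    ∃ v w, P.Adj v w ∧ p = (({v, w} : Finset V), ({v} : Finset V)) := by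
  obtain ⟨u, w, hadj, h1, h2⟩ := hm.1 p hp
  rcases h2 with h2 | h2
  · exact ⟨u, w, hadj, by rw [← h1, ← h2]⟩
  · refine ⟨w, u, hadj.symm, ?_⟩
    rw [← h2, Finset.pair_comm u w] at *
    rw [← h1]

lemma good_exists_h {m : Finset (Finset V × Finset V)}
    (hm : IsMatching (GraphArc P) m)
    (hcov : ∀ σ : Finset V, ((∃ x : V, σ = {x}) ∨ (∃ x y : V, P.Adj x y ∧ σ = {x, y})) →
        ∃ p ∈ m, p.1 = σ ∨ p.2 = σ) :
    ∃ h : V → V, Valid P h ∧ m = mOf h := by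
  have key : ∀ v : V, ∃ w, P.Adj v w ∧ (({v, w} : Finset V), ({v} : Finset V)) ∈ m := by
    intro v
    obtain ⟨p, hp, hp2⟩ := hcov {v} (Or.inl ⟨v, rfl⟩)
    obtain ⟨a, b, hadj, hform⟩ := mem_good_form hm hp
    rcases hp2 with h1 | h1
    · exfalso
      have : ({a, b} : Finset V).card = ({v} : Finset V).card := by
        rw [← h1, hform]
      rw [Finset.card_pair hadj.ne, Finset.card_singleton] at this
      omega
    · have hav : a = v := Finset.singleton_injective (by rw [← h1, hform])
      subst hav
      exact ⟨b, hadj, hform ▸ hp⟩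
  choose h hadj hmem using key
  have huniq : ∀ p ∈ m, ∀ v : V, p.2 = ({v} : Finset V) →
      p = (({v, h v} : Finset V), ({v} : Finset V)) := by
    intro p hp v hp2
    by_contra hne
    have := (hm.2 p hp _ (hmem v) hne).2.2.2
    exact this hp2
  have hvalid : Valid P h := by
    refine ⟨hadj, fun v hvv => ?_⟩
    have h1 := hmem v
    have h2 := hmem (h v)
    rw [hvv] at h2
    have hne : (({v, h v} : Finset V), ({v} : Finset V)) ≠
        (({h v, v} : Finset V), ({h v} : Finset V)) := by
      intro e
      have := congrArg Prod.snd e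
      exact (hadj v).ne' (Finset.singleton_injective this).symm
    have := (hm.2 _ h1 _ h2 hne).1
    exact this (Finset.pair_comm v (h v))
  refine ⟨h, hvalid, ?_⟩
  apply Finset.Subset.antisymm
  · intro p hp
    obtain ⟨v, w, hvw, rfl⟩ := mem_good_form hm hp
    have := huniq _ hp v rfl
    rw [this]
    simp [mOf]
  · intro p hp
    obtain ⟨v, rfl⟩ := mOf_mem p hp
    exact hmem v

lemma matchset_eq (hcard : P.edgeFinset.card = Fintype.card V) :
    {m : Finset (Finset V × Finset V) | IsMatching (GraphArc P) m ∧
      ∀ σ : Finset V, ((∃ x : V, σ = {x}) ∨ (∃ x y : V, P.Adj x y ∧ σ = {x, y})) →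
        ∃ p ∈ m, p.1 = σ ∨ p.2 = σ} = mOf '' {h : V → V | Valid P h} := by
  ext m
  simp only [Set.mem_setOf_eq, Set.mem_image]
  constructor
  · rintro ⟨h1, h2⟩
    obtain ⟨h, hv, rfl⟩ := good_exists_h h1 h2
    exact ⟨h, hv, rfl⟩
  · rintro ⟨h, hv, rfl⟩
    exact mOf_good hv hcard

lemma mOf_injOn : Set.InjOn (mOf (V := V)) {h : V → V | Valid P h} := by
  intro h hh g hg e
  funext v
  have h1 : (({v, h v} : Finset V), ({v} : Finset V)) ∈ mOf g := by
    rw [← e]; simp [mOf]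
  obtain ⟨w, hw⟩ := mOf_mem _ h1
  have hwv : v = w := Finset.singleton_injective (congrArg Prod.snd hw)
  subst hwv
  have h3 : ({v, h v} : Finset V) = {v, g v} := congrArg Prod.fst hw
  have : h v ∈ ({v, g v} : Finset V) := by
    rw [← h3]; simp
  simp only [mem_insert, mem_singleton] at this
  rcases this with h2 | h2
  · exact absurd h2 (valid_ne hh v)
  · exact h2

end

/-- a pseudo-tree `P` (a finite connected simple graph with
`|E(P)| = |V(P)|`, i.e. containing exactly one cycle) has exactly two perfect
matchings on its barycentric subdivision `B(P) = F(P)`: exactly two matchings on the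
face poset cover every face of `P`. -/
theorem pseudo_tree_two_perfect_matchings {V : Type*} [Fintype V] [DecidableEq V]
    (P : SimpleGraph V) [DecidableRel P.Adj]
    (hconn : P.Connected) (hcard : P.edgeFinset.card = Fintype.card V) :
    {m : Finset (Finset V × Finset V) | IsMatching (GraphArc P) m ∧
      ∀ σ : Finset V, ((∃ x : V, σ = {x}) ∨ (∃ x y : V, P.Adj x y ∧ σ = {x, y})) →
        ∃ p ∈ m, p.1 = σ ∨ p.2 = σ}.ncard = 2 := by
  classical
  rw [matchset_eq hcard, Set.ncard_image_of_injOn mOf_injOn]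
  exact core (Fintype.card V) V inferInstance inferInstance P inferInstance rfl hconn hcard
end

section
/- Let n ≥ 3 and let L_n be the Laplacian matrix of the cycle graph C_n on n vertices. Then det(L_n − Id) equals 0 if n ≡ 0 (mod 6), equals −1 if n ≡ 1 or 5 (mod 6), equals −3 if n ≡ 2 or 4 (mod 6), and equals −4 if n ≡ 3 (mod 6). -/
open Matrix Equiv Finset
open scoped Fin.CommRing Fin.NatCast Fin.IntCast

lemma perm_entry (m : ℕ) (z : ℂ) (i j : Fin (m+3)) :
    (z • (1 : Matrix (Fin (m+3)) (Fin (m+3)) ℂ)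
      - (Equiv.addRight (1 : Fin (m+3))).permMatrix ℂ) i j
      = (if i = j then z else 0) - (if i + 1 = j then 1 else 0) := by
  simp [Matrix.sub_apply, Matrix.smul_apply, Matrix.one_apply, PEquiv.toMatrix_apply,
    Equiv.toPEquiv_apply, smul_eq_mul, mul_ite, mul_one, mul_zero]

lemma fin_one_ne_zero' (m : ℕ) : (1 : Fin (m+3)) ≠ 0 := by
  simp [Fin.ext_iff]

lemma det_perm_char (m : ℕ) (z : ℂ) :
    (z • (1 : Matrix (Fin (m+3)) (Fin (m+3)) ℂ)
      - (Equiv.addRight (1 : Fin (m+3))).permMatrix ℂ).det = z ^ (m+3) - 1 := by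
  set M := z • (1 : Matrix (Fin (m+3)) (Fin (m+3)) ℂ)
      - (Equiv.addRight (1 : Fin (m+3))).permMatrix ℂ with hM
  set c : Equiv.Perm (Fin (m+3)) := Equiv.addRight (-1 : Fin (m+3)) with hc
  have hone : (1 : Fin (m+3)) ≠ 0 := fin_one_ne_zero' m
  have hcne : (1 : Equiv.Perm (Fin (m+3))) ≠ c := by
    intro h
    have h0 := congrArg (fun e : Equiv.Perm (Fin (m+3)) => e 1) h
    simp only [Equiv.Perm.coe_one, id_eq, hc, Equiv.coe_addRight, add_neg_cancel] at h0
    exact hone h0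
  have key : ∀ τ : Equiv.Perm (Fin (m+3)), τ ≠ 1 → τ ≠ c → ∃ i, M (τ i) i = 0 := by
    intro τ h1 h2
    by_contra h
    push_neg at h
    have hco : ∀ i : Fin (m+3), τ i = i ∨ τ i = i + (-1) := by
      intro i
      by_contra hco
      push_neg at hco
      apply h i
      rw [hM, perm_entry]
      rw [if_neg hco.1, if_neg, sub_zero]
      intro he
      exact hco.2 (eq_add_neg_iff_add_eq.mpr he)
    by_cases hid : ∀ i, τ i = i
    · exact h1 (Equiv.ext hid)
    · push_neg at hid
      obtain ⟨i₀, hi₀⟩ := hid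
      have hi₀' : τ i₀ = i₀ + (-1) := (hco i₀).resolve_left hi₀
      have step : ∀ j : Fin (m+3), τ j = j + (-1) → τ (j + (-1)) = j + (-1) + (-1) := by
        intro j hj
        rcases hco (j + (-1)) with h' | h'
        · exfalso
          have hjj : j + (-1) = j := τ.injective (by rw [h', hj])
          simp at hjj
        · exact h'
      have all : ∀ k : ℕ, τ (i₀ + (-(k : Fin (m+3)))) = i₀ + (-(k : Fin (m+3))) + (-1) := by
        intro k
        induction k with
        | zero => simpa using hi₀'
        | succ k ih =>
          have hst := step _ ih
          have hk : i₀ + (-((k+1 : ℕ) : Fin (m+3))) = i₀ + (-(k : Fin (m+3))) + (-1) := by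
            push_cast
            ring
          rw [hk]
          exact hst
      apply h2
      ext x
      have hx : x = i₀ + (-((i₀ - x).val : Fin (m+3))) := by
        rw [Fin.cast_val_eq_self]
        ring
      rw [hx]
      have := all (i₀ - x).val
      simp only [this, hc, Equiv.coe_addRight]
  rw [Matrix.det_apply]
  rw [← Finset.sum_subset (Finset.subset_univ ({1, c} : Finset (Equiv.Perm (Fin (m+3)))))]
  · rw [Finset.sum_pair hcne]
    have t1 : (Equiv.Perm.sign (1 : Equiv.Perm (Fin (m+3)))) •
        ∏ i, M ((1 : Equiv.Perm (Fin (m+3))) i) i = z ^ (m+3) := by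
      simp only [Equiv.Perm.sign_one, one_smul, Equiv.Perm.one_apply]
      have hd : ∀ i : Fin (m+3), M i i = z := by
        intro i
        rw [hM, perm_entry, if_pos rfl, if_neg, sub_zero]
        intro he
        exact hone (by simpa using he)
      simp [hd]
    have hσrot : Equiv.addRight (1 : Fin (m+3)) = finRotate (m+3) := by
      ext i
      simp [finRotate_succ_apply]
    have hcinv : c = (Equiv.addRight (1 : Fin (m+3)))⁻¹ := by
      apply eq_inv_of_mul_eq_one_left
      ext x
      simp [hc, Equiv.Perm.mul_apply, add_assoc]
    have hsign : Equiv.Perm.sign c = (-1 : ℤˣ) ^ (m + 2) := by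
      rw [hcinv, map_inv, hσrot]
      rw [sign_finRotate]
      simp
    have t2 : (Equiv.Perm.sign c) • ∏ i, M (c i) i = -1 := by
      have hd : ∀ i : Fin (m+3), M (c i) i = -1 := by
        intro i
        rw [hc]
        simp only [Equiv.coe_addRight]
        rw [hM, perm_entry, if_neg, if_pos (by ring), zero_sub]
        intro he
        have h10 : (1 : Fin (m+3)) = 0 := by
          have := congrArg (fun t => t - i - (-1)) he
          simpa [sub_eq_add_neg, add_assoc, add_comm, add_left_comm] using this.symm
        exact hone h10
      simp only [hd, Finset.prod_const, Finset.card_univ, Fintype.card_fin]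
      rw [hsign, Units.smul_def, zsmul_eq_mul]
      push_cast
      rw [← pow_add]
      exact Odd.neg_one_pow ⟨m + 2, by ring⟩
    rw [t1, t2]
    ring
  · intro τ _ hτ
    simp only [Finset.mem_insert, Finset.mem_singleton] at hτ
    push_neg at hτ
    obtain ⟨i, hi⟩ := key τ hτ.1 hτ.2
    have hz : ∏ j, M (τ j) j = 0 := Finset.prod_eq_zero (Finset.mem_univ i) hi
    rw [hz]
    simp

noncomputable def zeta : ℂ := (1 + Real.sqrt 3 * Complex.I) / 2

lemma zeta_sq : zeta ^ 2 = zeta - 1 := by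
  have hs : ((Real.sqrt 3 : ℝ) : ℂ) ^ 2 = 3 := by
    rw [← Complex.ofReal_pow, Real.sq_sqrt (by norm_num : (0:ℝ) ≤ 3)]
    norm_num
  have hI : (Complex.I) ^ 2 = -1 := Complex.I_sq
  have hs2 : ((Real.sqrt 3 : ℝ) : ℂ) ^ 2 * Complex.I ^ 2 = -3 := by
    rw [hI, hs]; ring
  unfold zeta
  linear_combination (1/4 : ℂ) * hs2

lemma det_N (m : ℕ) :
    ((1 : Matrix (Fin (m+3)) (Fin (m+3)) ℂ)
      - (Equiv.addRight (1 : Fin (m+3))).permMatrix ℂ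
      - (Equiv.addRight (-1 : Fin (m+3))).permMatrix ℂ).det
    = zeta ^ (m+3) + (1 - zeta) ^ (m+3) - 2 := by
  set σ := Equiv.addRight (1 : Fin (m+3)) with hσ
  set τ := Equiv.addRight (-1 : Fin (m+3)) with hτ
  set Q := σ.permMatrix ℂ with hQdef
  set Q' := τ.permMatrix ℂ with hQ'def
  set N := (1 : Matrix (Fin (m+3)) (Fin (m+3)) ℂ) - Q - Q' with hNdef
  have hcomp : σ.trans τ = Equiv.refl (Fin (m+3)) := by
    ext x
    simp [hσ, hτ, add_assoc]
  have hQQ' : Q * Q' = 1 := by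
    rw [hQdef, hQ'def]
    rw [show σ.permMatrix ℂ * τ.permMatrix ℂ = ((σ.trans τ).toPEquiv).toMatrix by
      rw [Equiv.toPEquiv_trans, PEquiv.toMatrix_trans]]
    rw [hcomp, Equiv.toPEquiv_refl, PEquiv.toMatrix_refl]
  have h1 : zeta * (1 - zeta) = 1 := by linear_combination -zeta_sq
  have hfact : Q * N = -((zeta • 1 - Q) * ((1 - zeta) • 1 - Q)) := by
    rw [hNdef]
    simp only [mul_sub, sub_mul, mul_one, one_mul, smul_mul_assoc, mul_smul_comm, hQQ']
    match_scalars <;> try ring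
    all_goals try linear_combination -zeta_sq
    all_goals linear_combination (-2 : ℂ) * zeta_sq
  have hdet1 : (zeta • (1 : Matrix (Fin (m+3)) (Fin (m+3)) ℂ) - Q).det
      = zeta ^ (m+3) - 1 := det_perm_char m zeta
  have hdet2 : ((1 - zeta) • (1 : Matrix (Fin (m+3)) (Fin (m+3)) ℂ) - Q).det
      = (1 - zeta) ^ (m+3) - 1 := det_perm_char m (1 - zeta)
  have hσrot : σ = finRotate (m+3) := by
    ext i
    simp [hσ, finRotate_succ_apply]
  have hdetQ : Q.det = (-1 : ℂ)^(m+2) := by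
    rw [hQdef, Matrix.det_permutation, hσrot, sign_finRotate]
    push_cast
    ring
  have hsq : ((-1:ℂ)^(m+2)) * ((-1:ℂ)^(m+2)) = 1 := by
    rw [← pow_add]
    exact Even.neg_one_pow ⟨m+2, by ring⟩
  have hodd : ((-1:ℂ)^(m+2)) * ((-1:ℂ)^(m+3)) = -1 := by
    rw [← pow_add]
    exact Odd.neg_one_pow ⟨m+2, by ring⟩
  have hpow : zeta ^ (m+3) * (1 - zeta) ^ (m+3) = 1 := by
    rw [← mul_pow, h1, one_pow]
  calc N.det = ((-1:ℂ)^(m+2) * (-1:ℂ)^(m+2)) * N.det := by rw [hsq, one_mul]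
    _ = (-1:ℂ)^(m+2) * (Q.det * N.det) := by rw [hdetQ]; ring
    _ = (-1:ℂ)^(m+2) * (Q * N).det := by rw [Matrix.det_mul]
    _ = (-1:ℂ)^(m+2) * ((-1:ℂ)^(m+3) *
          ((zeta ^ (m+3) - 1) * ((1 - zeta) ^ (m+3) - 1))) := by
        rw [hfact, Matrix.det_neg, Matrix.det_mul, hdet1, hdet2, Fintype.card_fin]
    _ = zeta ^ (m+3) + (1 - zeta) ^ (m+3) - 2 := by
        linear_combination ((zeta^(m+3)-1)*((1-zeta)^(m+3)-1)) * hodd - hpow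

lemma permMatrix_apply_addRight {R : Type*} [Zero R] [One R] (m : ℕ) (a : Fin (m+3))
    (i j : Fin (m+3)) :
    (Equiv.addRight a).permMatrix R i j = if i + a = j then 1 else 0 := by
  simp [PEquiv.toMatrix_apply, Equiv.toPEquiv_apply]

lemma lap_eq (m : ℕ) :
    (SimpleGraph.cycleGraph (m+3)).lapMatrix ℤ - 1
      = (1 : Matrix (Fin (m+3)) (Fin (m+3)) ℤ)
        - (Equiv.addRight (1 : Fin (m+3))).permMatrix ℤ
        - (Equiv.addRight (-1 : Fin (m+3))).permMatrix ℤ := by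
  have hone : (1 : Fin (m+3)) ≠ 0 := fin_one_ne_zero' m
  have h2ne : (1 : Fin (m+3)) ≠ -1 := by
    intro h
    have hval := congrArg Fin.val h
    rw [Fin.val_one, Fin.coe_neg_one] at hval
    omega
  ext i j
  simp only [SimpleGraph.lapMatrix, SimpleGraph.degMatrix, Matrix.sub_apply,
    Matrix.one_apply, Matrix.diagonal_apply, SimpleGraph.adjMatrix_apply,
    permMatrix_apply_addRight, SimpleGraph.cycleGraph_degree_three_le]
  by_cases hij : i = j
  · subst hij
    have c1 : ¬ (i + 1 = i) := fun h => hone (by linear_combination h)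
    have c2 : ¬ (i + -1 = i) := fun h => hone (by linear_combination -h)
    rw [if_pos rfl, if_pos rfl, if_neg (SimpleGraph.irrefl _), if_neg c1, if_neg c2]
    norm_num
  · rw [if_neg hij, if_neg hij]
    by_cases h2 : i + 1 = j
    · have h3 : ¬ (i + -1 = j) := by
        intro h3
        exact h2ne (by linear_combination h2 - h3)
      have hadj : (SimpleGraph.cycleGraph (m+3)).Adj i j := by
        rw [SimpleGraph.cycleGraph_adj]
        right
        linear_combination -h2
      rw [if_pos hadj, if_pos h2, if_neg h3]
    · by_cases h3 : i + -1 = j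
      · have hadj : (SimpleGraph.cycleGraph (m+3)).Adj i j := by
          rw [SimpleGraph.cycleGraph_adj]
          left
          linear_combination h3
        rw [if_pos hadj, if_neg h2, if_pos h3]
        norm_num
      · have hadj : ¬ (SimpleGraph.cycleGraph (m+3)).Adj i j := by
          rw [SimpleGraph.cycleGraph_adj]
          rintro (h | h)
          · exact h3 (by linear_combination h)
          · exact h2 (by linear_combination -h)
        rw [if_neg hadj, if_neg h2, if_neg h3]

/-- for `n ≥ 3`, the determinant of `L_n − Id`, where `L_n` is the
Laplacian matrix of the cycle graph `C_n`, is `0, −1, −3, −4` according to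
`n mod 6` being `0`, `1 or 5`, `2 or 4`, `3` respectively. -/
theorem det_lapMatrix_cycleGraph_sub_one (n : ℕ) (hn : 3 ≤ n) :
    ((SimpleGraph.cycleGraph n).lapMatrix ℤ - 1).det =
      if n % 6 = 0 then 0
      else if n % 6 = 1 ∨ n % 6 = 5 then -1
      else if n % 6 = 2 ∨ n % 6 = 4 then -3
      else -4 := by
  obtain ⟨m, rfl⟩ : ∃ m, n = m + 3 := ⟨n - 3, by omega⟩
  rw [lap_eq]
  set MZ := (1 : Matrix (Fin (m+3)) (Fin (m+3)) ℤ)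
        - (Equiv.addRight (1 : Fin (m+3))).permMatrix ℤ
        - (Equiv.addRight (-1 : Fin (m+3))).permMatrix ℤ with hMZ
  have hmap : MZ.map ⇑(Int.castRingHom ℂ)
      = (1 : Matrix (Fin (m+3)) (Fin (m+3)) ℂ)
        - (Equiv.addRight (1 : Fin (m+3))).permMatrix ℂ
        - (Equiv.addRight (-1 : Fin (m+3))).permMatrix ℂ := by
    ext i j
    simp [hMZ, Matrix.map_apply, Matrix.sub_apply, Matrix.one_apply,
      permMatrix_apply_addRight, apply_ite (Int.cast : ℤ → ℂ)]
  have hcast : ((MZ.det : ℤ) : ℂ) = zeta ^ (m+3) + (1 - zeta) ^ (m+3) - 2 := by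
    calc ((MZ.det : ℤ) : ℂ) = (Int.castRingHom ℂ) MZ.det := rfl
      _ = (MZ.map ⇑(Int.castRingHom ℂ)).det := RingHom.map_det _ _
      _ = zeta ^ (m+3) + (1 - zeta) ^ (m+3) - 2 := by rw [hmap]; exact det_N m
  have h6 : zeta ^ 6 = 1 := by
    linear_combination (zeta^4 + zeta^3 - zeta - 1) * zeta_sq
  have h6' : (1 - zeta) ^ 6 = 1 := by
    linear_combination (((1-zeta)^3 - 1) * ((1 - zeta) + 1)) * zeta_sq
  obtain ⟨q, r, hr6, hq⟩ : ∃ q r, r < 6 ∧ m + 3 = 6*q + r :=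
    ⟨(m+3)/6, (m+3)%6, Nat.mod_lt _ (by norm_num), by omega⟩
  have hmod : (m+3) % 6 = r := by omega
  have hz : zeta ^ (m+3) + (1 - zeta)^(m+3) - 2 = zeta ^ r + (1-zeta)^r - 2 := by
    rw [hq, pow_add, pow_mul, h6, one_pow, one_mul, pow_add, pow_mul, h6', one_pow, one_mul]
  rw [hmod]
  rw [hz] at hcast
  interval_cases r
  · have hv : ((MZ.det : ℤ) : ℂ) = ((0 : ℤ) : ℂ) := by
      rw [hcast]; push_cast; ring
    norm_num
    exact_mod_cast hv
  · have hv : ((MZ.det : ℤ) : ℂ) = ((-1 : ℤ) : ℂ) := by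
      rw [hcast]; push_cast; ring
    norm_num
    exact_mod_cast hv
  · have hv : ((MZ.det : ℤ) : ℂ) = ((-3 : ℤ) : ℂ) := by
      rw [hcast]; push_cast; linear_combination 2*zeta_sq
    norm_num
    exact_mod_cast hv
  · have hv : ((MZ.det : ℤ) : ℂ) = ((-4 : ℤ) : ℂ) := by
      rw [hcast]; push_cast; linear_combination 3*zeta_sq
    norm_num
    exact_mod_cast hv
  · have hv : ((MZ.det : ℤ) : ℂ) = ((-3 : ℤ) : ℂ) := by
      rw [hcast]; push_cast; linear_combination (2*zeta^2 - 2*zeta + 2)*zeta_sq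
    norm_num
    exact_mod_cast hv
  · have hv : ((MZ.det : ℤ) : ℂ) = ((-1 : ℤ) : ℂ) := by
      rw [hcast]; push_cast; linear_combination (5*zeta^2 - 5*zeta)*zeta_sq
    norm_num
    exact_mod_cast hv
end

section
/- Let G be a finite simple graph. There is a bijection between the set of discrete Morse matchings on the face poset F(G) (matchings inducing no oriented cycles) and the set of rooted spanning forests of G; moreover, under this bijection a discrete Morse matching with exactly k arcs corresponds to a rooted spanning forest with exactly k edges. -/
set_option linter.unusedSectionVars false
set_option linter.unusedVariables false
set_option linter.unnecessarySimpa false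

namespace CJ
open SimpleGraph

variable {V : Type*} [DecidableEq V] [Fintype V] {G : SimpleGraph V}
  {m : Finset (Finset V × Finset V)} {f : V → Option V} {F : SimpleGraph V} {r : V → V}

lemma pair_eq_cases {x y u v : V} (h : ({x, y} : Finset V) = {u, v}) (hxy : x ≠ y) :
    (x = u ∧ y = v) ∨ (x = v ∧ y = u) := by
  have hx : x ∈ ({u, v} : Finset V) := h ▸ (by simp)
  have hy : y ∈ ({u, v} : Finset V) := h ▸ (by simp)
  simp only [Finset.mem_insert, Finset.mem_singleton] at hx hy
  rcases hx with rfl | rfl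
  · rcases hy with rfl | rfl
    · exact absurd rfl hxy
    · exact Or.inl ⟨rfl, rfl⟩
  · rcases hy with rfl | rfl
    · exact Or.inr ⟨rfl, rfl⟩
    · exact absurd rfl hxy

lemma arc_shape (hm : IsMatching (GraphArc G) m) {σ τ : Finset V} (hp : (σ, τ) ∈ m) :
    ∃ x y, G.Adj x y ∧ σ = {x, y} ∧ τ = {x} := by
  obtain ⟨u, v, hadj, h1, h2⟩ := hm.1 _ hp
  simp only at h1 h2
  rcases h2 with h2 | h2
  · exact ⟨u, v, hadj, h1, h2⟩
  · exact ⟨v, u, hadj.symm, by rw [h1, Finset.pair_comm], h2⟩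

lemma mem_norm (hm : IsMatching (GraphArc G) m) {p} (hp : p ∈ m) :
    ∃ x y, G.Adj x y ∧ p = ({x, y}, {x}) := by
  obtain ⟨x, y, hadj, h1, h2⟩ := arc_shape hm (σ := p.1) (τ := p.2) (by simpa using hp)
  exact ⟨x, y, hadj, Prod.ext h1 h2⟩

lemma arc_adj {x y : V} (hm : IsMatching (GraphArc G) m) (h : ({x, y}, {x}) ∈ m) :
    G.Adj x y := by
  obtain ⟨u, v, hadj, h1, h2⟩ := arc_shape hm h
  have hx : x = u := Finset.singleton_injective h2
  subst hx
  by_cases hxy : x = y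
  · exfalso; subst hxy
    have hxx : ({x, x} : Finset V) = {x} := by simp
    rw [hxx] at h1
    have h2 : ({x, v} : Finset V).card = 2 := Finset.card_pair hadj.ne
    rw [← h1] at h2; simp at h2
  · rcases pair_eq_cases h1 hxy with ⟨h3, h4⟩ | ⟨h3, h4⟩
    · exact h3 ▸ h4 ▸ hadj
    · exact h3 ▸ h4 ▸ hadj.symm

lemma arc_ne {x y : V} (hm : IsMatching (GraphArc G) m) (h : ({x, y}, {x}) ∈ m) : y ≠ x :=
  (arc_adj hm h).ne'

lemma matching_unique {x y y' : V} (hm : IsMatching (GraphArc G) m)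
    (h1 : ({x, y}, {x}) ∈ m) (h2 : ({x, y'}, {x}) ∈ m) : y = y' := by
  have hy := arc_ne hm h1
  by_cases hpq : (({x, y}, {x}) : Finset V × Finset V) = ({x, y'}, {x})
  · have h3 : ({x, y} : Finset V) = {x, y'} := congrArg Prod.fst hpq
    rcases pair_eq_cases h3 (Ne.symm hy) with ⟨_, h⟩ | ⟨h, h'⟩
    · exact h
    · exact h' ▸ h
  · exact absurd rfl (hm.2 _ h1 _ h2 hpq).2.2.2

lemma matching_not_both {x y : V} (hm : IsMatching (GraphArc G) m) (hxy : x ≠ y)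
    (h1 : ({x, y}, {x}) ∈ m) (h2 : ({y, x}, {y}) ∈ m) : False := by
  have hpq : (({x, y}, {x}) : Finset V × Finset V) ≠ ({y, x}, {y}) := by
    intro h
    exact hxy (Finset.singleton_injective (congrArg Prod.snd h))
  have := (hm.2 _ h1 _ h2 hpq).1
  simp only [Finset.pair_comm y x] at this
  exact this rfl

open scoped Classical in

noncomputable def mToF (m : Finset (Finset V × Finset V)) : V → Option V :=
  fun v => if h : ∃ w, ({v, w}, {v}) ∈ m then some h.choose else none

lemma mToF_eq_some (hm : IsMatching (GraphArc G) m) {v w : V} :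
    mToF m v = some w ↔ ({v, w}, {v}) ∈ m := by
  constructor
  · intro h
    classical
    unfold mToF at h
    split_ifs at h with hex
    · have hs := hex.choose_spec
      rw [Option.some_inj] at h
      exact h ▸ hs
  · intro h
    have hex : ∃ w, ({v, w}, {v}) ∈ m := ⟨w, h⟩
    classical
    unfold mToF; rw [dif_pos hex]
    exact congrArg some (matching_unique hm hex.choose_spec h)

lemma mToF_eq_none {v : V} : mToF m v = none ↔ ∀ w, ({v, w}, {v}) ∉ m := by
  classical
  unfold mToF; split_ifs with h
  · simp only [reduceCtorEq, false_iff, not_forall, not_not]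
    exact ⟨h.choose, h.choose_spec⟩
  · push_neg at h; simpa using h

def fToM (f : V → Option V) : Finset (Finset V × Finset V) :=
  Finset.univ.biUnion fun v => (f v).elim ∅ fun w => {({v, w}, {v})}

lemma mem_fToM {p : Finset V × Finset V} :
    p ∈ fToM f ↔ ∃ v w, f v = some w ∧ p = ({v, w}, {v}) := by
  simp only [fToM, Finset.mem_biUnion, Finset.mem_univ, true_and]
  constructor
  · rintro ⟨v, hv⟩
    cases h : f v with
    | none => rw [h] at hv; simp [Option.elim] at hv
    | some w =>
        rw [h] at hv; simp only [Option.elim, Finset.mem_singleton] at hv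
        exact ⟨v, w, h, hv⟩
  · rintro ⟨v, w, hw, rfl⟩
    exact ⟨v, by rw [hw]; simp [Option.elim]⟩

def Good (G : SimpleGraph V) (f : V → Option V) : Prop :=
  (∀ v w, f v = some w → G.Adj v w) ∧
    Irreflexive (Relation.TransGen (fun a b => f a = some b))

lemma good_fToM_isMatching (hf : Good G f) : IsMatching (GraphArc G) (fToM f) := by
  constructor
  · intro p hp
    obtain ⟨v, w, hw, rfl⟩ := mem_fToM.mp hp
    exact ⟨v, w, hf.1 v w hw, rfl, Or.inl rfl⟩
  · intro p hp q hq hpq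
    obtain ⟨v, w, hw, rfl⟩ := mem_fToM.mp hp
    obtain ⟨v', w', hw', rfl⟩ := mem_fToM.mp hq
    have hvw : v ≠ w := (hf.1 v w hw).ne
    have hvw' : v' ≠ w' := (hf.1 v' w' hw').ne
    have hne : v ≠ v' := by
      rintro rfl
      rw [hw] at hw'
      exact hpq (by rw [Option.some_inj] at hw'; rw [hw'])
    refine ⟨?_, ?_, ?_, ?_⟩
    · -- {v,w} ≠ {v',w'}
      intro h
      simp only at h
      rcases pair_eq_cases h hvw with ⟨h1, h2⟩ | ⟨h1, h2⟩
      · exact hne h1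
      · -- v = w', w = v' : f v = some w = some v', f v' = some w' = some v : 2-cycle
        subst h1 h2
        exact hf.2 _ (Relation.TransGen.head hw (Relation.TransGen.single hw'))
    · intro h
      simp only at h
      have hc := congrArg Finset.card h
      rw [Finset.card_pair hvw, Finset.card_singleton] at hc; omega
    · intro h
      simp only at h
      have hc := congrArg Finset.card h
      rw [Finset.card_singleton, Finset.card_pair hvw'] at hc; omega
    · intro h
      exact hne (Finset.singleton_injective (by simpa using h))

/-- Every vertex of a cycle list has a successor in the list. -/

lemma cycle_succ {α : Type*} {R : α → α → Prop} {l : List α} (h : IsCycleList R l) :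
    ∀ x ∈ l, ∃ y ∈ l, R x y := by
  obtain ⟨a, t, rfl⟩ : ∃ a t, l = a :: t := by
    cases l with
    | nil => exact absurd h (by simp [IsCycleList])
    | cons a t => exact ⟨a, t, rfl⟩
  obtain ⟨-, hch⟩ := h
  have hsub : ∀ z ∈ t ++ [a], z ∈ a :: t := by
    intro z hz
    rcases List.mem_append.mp hz with hz | hz
    · exact List.mem_cons_of_mem _ hz
    · simp at hz; simp [hz]
  replace hch : (∀ h : 0 < (t ++ [a]).length, R a ((t ++ [a]).get ⟨0, h⟩)) ∧
      ∀ (i : ℕ) (h : i < (t ++ [a]).length - 1),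
        R ((t ++ [a]).get ⟨i, by omega⟩) ((t ++ [a]).get ⟨i + 1, by omega⟩) := by
    have := List.isChain_iff_getElem.mp hch
    refine ⟨fun h => ?_, fun i h => ?_⟩
    · have := this 0 (by simp); simpa using this
    · have := this (i+1) (by simp at h ⊢; omega); simpa using this
  intro x hx
  rcases List.mem_cons.mp hx with hxa | hx
  · have h0 : 0 < (t ++ [a]).length := by simp
    exact ⟨(t ++ [a]).get ⟨0, h0⟩, hsub _ (List.get_mem _ _), hxa ▸ hch.1 h0⟩
  · obtain ⟨i, hx⟩ := List.mem_iff_get.mp hx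
    have hi' : (i : ℕ) < (t ++ [a]).length - 1 := by
      have := i.2; simp only [List.length_append, List.length_singleton]; omega
    have hget : (t ++ [a]).get ⟨i, by simp only [List.length_append, List.length_singleton]; omega⟩ = t.get i := by
      simp [List.getElem_append_left]
    refine ⟨(t ++ [a]).get ⟨(i : ℕ) + 1, by simp only [List.length_append, List.length_singleton]; have := i.2; omega⟩, hsub _ (List.get_mem _ _), ?_⟩
    have h2 := hch.2 i hi'
    rw [hget] at h2
    rwa [hx] at h2

lemma iterate_transGen {β : Type*} {g : β → β} {R : β → β → Prop}
    (hg : ∀ x, R x (g x)) (x : β) : ∀ k, 0 < k → Relation.TransGen R x (g^[k] x) := by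
  intro k
  induction k with
  | zero => omega
  | succ n ih =>
      intro _
      rcases Nat.eq_zero_or_pos n with rfl | hn
      · simpa using Relation.TransGen.single (hg x)
      · rw [Function.iterate_succ_apply']
        exact (ih hn).tail (hg _)

lemma exists_loop {β : Type*} [Finite β] {g : β → β} {R : β → β → Prop}
    (hg : ∀ x, R x (g x)) (x : β) : ∃ y, Relation.TransGen R y y := by
  obtain ⟨i, j, hij, heq⟩ := Finite.exists_ne_map_eq_of_infinite (fun n : ℕ => g^[n] x)
  wlog hlt : i < j generalizing i j
  · exact this j i hij.symm heq.symm (by omega)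
  refine ⟨g^[i] x, ?_⟩
  have h1 : g^[j] x = g^[j - i] (g^[i] x) := by
    rw [← Function.iterate_add_apply]
    congr 1; omega
  have := iterate_transGen hg (g^[i] x) (j - i) (by omega)
  rwa [← h1, ← heq] at this

lemma not_nodup_decomp : ∀ {l : List α}, ¬l.Nodup → ∃ b s t u, l = s ++ b :: (t ++ b :: u) := by
  intro l
  induction l with
  | nil => simp
  | cons x t ih =>
      intro h
      rw [List.nodup_cons] at h
      push_neg at h
      by_cases hx : x ∈ t
      · obtain ⟨s, u, rfl⟩ := List.append_of_mem hx
        exact ⟨x, [], s, u, by simp⟩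
      · obtain ⟨b, s, t', u, rfl⟩ := ih (h hx)
        exact ⟨b, x :: s, t', u, by simp⟩

lemma chain_loop_shorten {a : α} {l : List α} (hch : List.Chain R a (l ++ [a]))
    (hnd : ¬(a :: l).Nodup) :
    ∃ a' l', l'.length < l.length ∧ List.Chain R a' (l' ++ [a']) := by
  rw [List.nodup_cons] at hnd
  push_neg at hnd
  by_cases ha : a ∈ l
  · obtain ⟨s, t, rfl⟩ := List.append_of_mem ha
    have : (s ++ a :: t) ++ [a] = s ++ a :: (t ++ [a]) := by simp
    rw [this, List.Chain, List.isChain_cons_split] at hch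
    exact ⟨a, s, by simp, hch.1⟩
  · obtain ⟨b, s, t, u, rfl⟩ := not_nodup_decomp (hnd ha)
    have : (s ++ b :: (t ++ b :: u)) ++ [a] = s ++ b :: (t ++ b :: (u ++ [a])) := by simp
    rw [this, List.Chain, List.isChain_cons_split] at hch
    have h2 := hch.2
    rw [List.isChain_cons_split] at h2
    exact ⟨b, t, by simp; omega, h2.1⟩

lemma transGen_chain {a b : α} (h : Relation.TransGen R a b) :
    ∃ l, List.Chain R a (l ++ [b]) := by
  induction h with
  | single hab => exact ⟨[], List.Chain.cons ‹_› List.Chain.nil⟩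
  | @tail x y _ hbc ih =>
      obtain ⟨l, hl⟩ := ih
      refine ⟨l ++ [x], ?_⟩
      have heq : (l ++ [x]) ++ [y] = l ++ (x :: [y]) := by simp
      rw [heq, List.Chain, List.isChain_cons_split]
      exact ⟨hl, List.Chain.cons hbc List.Chain.nil⟩

lemma transGen_isCycleList {a : α} (h : Relation.TransGen R a a) :
    ∃ c, IsCycleList R c := by
  obtain ⟨l, hl⟩ := transGen_chain h
  clear h
  have main : ∀ (n : ℕ) (a : α) (l : List α), l.length = n → List.Chain R a (l ++ [a]) →
      ∃ c, IsCycleList R c := by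
    intro n
    induction n using Nat.strong_induction_on with
    | _ n ih =>
        intro a l hn hl
        by_cases hnd : (a :: l).Nodup
        · exact ⟨a :: l, hnd, hl⟩
        · obtain ⟨a', l', hlen, hch⟩ := chain_loop_shorten hl hnd
          exact ih l'.length (hn ▸ hlen) a' l' rfl hch
  exact main l.length a l rfl hl

lemma good_fToM_nocycles (hf : Good G f) :
    ∀ γ : List (Finset V), γ ∉ cyclesOf (GraphArc G) (fToM f) := by
  intro γ hγ
  have hγ' : IsCycleList (MStep (GraphArc G) (fToM f)) γ := hγ
  -- step 1 : every singleton in γ has an f-successor singleton in γ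
  have claim1 : ∀ v : V, {v} ∈ γ → ∃ w, f v = some w ∧ {w} ∈ γ := by
    intro v hv
    obtain ⟨y, hyγ, hstep⟩ := cycle_succ hγ' {v} hv
    rcases hstep with ⟨⟨u, u', hadj, h1, _⟩, -⟩ | ⟨-, hmem⟩
    · exfalso
      have := congrArg Finset.card h1
      rw [Finset.card_singleton, Finset.card_pair hadj.ne] at this; omega
    · obtain ⟨v', w, hw, heq⟩ := mem_fToM.mp hmem
      have hv' : v' = v := Finset.singleton_injective (congrArg Prod.snd heq).symm
      subst hv'
      have hy : y = {v', w} := congrArg Prod.fst heq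
      have hvw : v' ≠ w := (hf.1 _ _ hw).ne
      obtain ⟨z, hzγ, hstep2⟩ := cycle_succ hγ' y hyγ
      rcases hstep2 with ⟨⟨u, u', hadj2, h1, h2⟩, hnm⟩ | ⟨-, hmem2⟩
      · -- downward step from the pair y; must go to {w}
        subst hy
        rcases pair_eq_cases h1 hvw with ⟨hu, hu'⟩ | ⟨hu, hu'⟩
        · subst hu; subst hu'
          rcases h2 with rfl | rfl
          · exact absurd (mem_fToM.mpr ⟨v', w, hw, rfl⟩) hnm
          · exact ⟨w, hw, hzγ⟩
        · subst hu; subst hu'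
          rcases h2 with rfl | rfl
          · exact ⟨w, hw, hzγ⟩
          · exact absurd (mem_fToM.mpr ⟨v', w, hw, rfl⟩) hnm
      · -- upward step from the pair y : impossible since y is not a singleton
        exfalso
        obtain ⟨a, b, hab, heq2⟩ := mem_fToM.mp hmem2
        have : y = {a} := congrArg Prod.snd heq2
        rw [hy] at this
        have := congrArg Finset.card this
        rw [Finset.card_singleton, Finset.card_pair hvw] at this; omega
  -- step 2 : γ contains a singleton
  have claim2 : ∃ v : V, {v} ∈ γ := by
    obtain ⟨a, t, rfl⟩ : ∃ a t, γ = a :: t := by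
      cases γ with
      | nil => exact absurd hγ' (by simp [IsCycleList])
      | cons a t => exact ⟨a, t, rfl⟩
    obtain ⟨y, hyγ, hstep⟩ := cycle_succ hγ' a (by simp)
    rcases hstep with ⟨⟨u, u', hadj, h1, h2⟩, -⟩ | ⟨-, hmem⟩
    · rcases h2 with rfl | rfl
      · exact ⟨u, hyγ⟩
      · exact ⟨u', hyγ⟩
    · obtain ⟨v', w, hw, heq⟩ := mem_fToM.mp hmem
      have ha : a = {v'} := congrArg Prod.snd heq
      exact ⟨v', by rw [← ha]; simp⟩
  -- step 3 : pigeonhole on the subtype of such singletons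
  obtain ⟨v0, hv0⟩ := claim2
  haveI : Finite V := Fintype.finite ‹_›
  let S := {v : V // {v} ∈ γ}
  let g : S → S := fun x => ⟨(claim1 x.1 x.2).choose, (claim1 x.1 x.2).choose_spec.2⟩
  have hg : ∀ x : S, (fun a b : S => f a.1 = some b.1) x (g x) := fun x =>
    (claim1 x.1 x.2).choose_spec.1
  obtain ⟨y, hy⟩ := exists_loop (R := fun a b : S => f a.1 = some b.1) hg (⟨v0, hv0⟩ : S)
  exact hf.2 y.1 (Relation.TransGen.lift Subtype.val (fun a b h => h) _ _ hy)

/-- The interleaved face list of a vertex cycle. -/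

def il (first : V) : List V → List (Finset V)
  | [] => []
  | [a] => [{a}, {a, first}]
  | a :: b :: t => {a} :: ({a, b} : Finset V) :: il first (b :: t)

lemma il_cons (first a : V) (l : List V) :
    ∃ tl, il first (a :: l) = {a} :: tl := by
  cases l with
  | nil => exact ⟨_, rfl⟩
  | cons b t => exact ⟨_, rfl⟩

lemma il_mem {first : V} :
    ∀ {l : List V} {a : V}, List.Chain (fun a b => f a = some b) a (l ++ [first]) →
      ∀ z ∈ il first (a :: l),
        (∃ x ∈ a :: l, z = {x}) ∨ (∃ x ∈ a :: l, ∃ y, f x = some y ∧ z = ({x, y} : Finset V)) := by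
  intro l
  induction l with
  | nil =>
      intro a hch z hz
      rw [List.nil_append, List.Chain, List.chain_cons] at hch
      have hz' : z ∈ [({a} : Finset V), {a, first}] := hz
      rcases List.mem_cons.mp hz' with rfl | hz'
      · exact Or.inl ⟨a, by simp, rfl⟩
      · rcases List.mem_cons.mp hz' with rfl | hz'
        · exact Or.inr ⟨a, by simp, first, hch.1, rfl⟩
        · simp at hz'
  | cons b t ih =>
      intro a hch z hz
      rw [List.cons_append, List.Chain, List.chain_cons] at hch
      have hz' : z ∈ ({a} : Finset V) :: ({a, b} : Finset V) :: il first (b :: t) := hz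
      rcases List.mem_cons.mp hz' with rfl | hz'
      · exact Or.inl ⟨a, by simp, rfl⟩
      · rcases List.mem_cons.mp hz' with rfl | hz'
        · exact Or.inr ⟨a, by simp, b, hch.1, rfl⟩
        · rcases ih hch.2 z hz' with ⟨x, hx, h⟩ | ⟨x, hx, y, hy, h⟩
          · exact Or.inl ⟨x, List.mem_cons_of_mem _ hx, h⟩
          · exact Or.inr ⟨x, List.mem_cons_of_mem _ hx, y, hy, h⟩

lemma il_nodup {first : V} (hne : ∀ v w : V, f v = some w → v ≠ w)
    (hnb : ∀ v w : V, f v = some w → f w = some v → False) :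
    ∀ {l : List V} {a : V}, List.Chain (fun a b => f a = some b) a (l ++ [first]) →
      (a :: l).Nodup → first ∉ a :: l → (il first (a :: l)).Nodup := by
  intro l
  induction l with
  | nil =>
      intro a hch hnd hfst
      rw [List.nil_append, List.Chain, List.chain_cons] at hch
      have haf : a ≠ first := by simp at hfst; exact fun h => hfst h.symm
      simp only [il, List.nodup_cons, List.mem_singleton, List.not_mem_nil, not_false_iff,
        List.nodup_nil, and_true, true_and]
      intro h
      have := congrArg Finset.card h
      rw [Finset.card_singleton, Finset.card_pair haf] at this; omega
  | cons b t ih =>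
      intro a hch hnd hfst
      rw [List.cons_append, List.Chain, List.chain_cons] at hch
      have hab : a ≠ b := hne _ _ hch.1
      have hand := List.nodup_cons.mp hnd
      have hfst' : first ∉ b :: t := by simp at hfst ⊢; exact ⟨hfst.2.1, hfst.2.2⟩
      have hinner := ih hch.2 hand.2 hfst'
      show (({a} : Finset V) :: ({a, b} : Finset V) :: il first (b :: t)).Nodup
      rw [List.nodup_cons, List.nodup_cons]
      refine ⟨?_, ?_, hinner⟩
      · -- {a} not in the rest
        intro hmem
        rcases List.mem_cons.mp hmem with heq | hmem
        · have := congrArg Finset.card heq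
          rw [Finset.card_singleton, Finset.card_pair hab] at this; omega
        · rcases il_mem hch.2 _ hmem with ⟨x, hx, h⟩ | ⟨x, hx, y, hy, h⟩
          · exact hand.1 (Finset.singleton_injective h ▸ hx)
          · have := congrArg Finset.card h
            rw [Finset.card_singleton, Finset.card_pair (hne _ _ hy)] at this; omega
      · -- {a, b} not in the inner list
        intro hmem
        rcases il_mem hch.2 _ hmem with ⟨x, hx, h⟩ | ⟨x, hx, y, hy, h⟩
        · have := congrArg Finset.card h
          rw [Finset.card_pair hab, Finset.card_singleton] at this; omega
        · rcases pair_eq_cases h hab with ⟨h1, h2⟩ | ⟨h1, h2⟩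
          · exact hand.1 (h1 ▸ hx)
          · exact hnb _ _ hch.1 (by rw [← h1, ← h2] at hy; exact hy)

lemma il_chain (hm : IsMatching (GraphArc G) m) {first : V} :
    ∀ {l : List V} {a : V}, List.Chain (fun a b => mToF m a = some b) a (l ++ [first]) →
      List.Chain (MStep (GraphArc G) m) {a} ((il first (a :: l)).tail ++ [({first} : Finset V)]) := by
  intro l
  induction l with
  | nil =>
      intro a hch
      rw [List.nil_append, List.Chain, List.chain_cons] at hch
      have hmem : ({a, first}, {a}) ∈ m := (mToF_eq_some hm).mp hch.1
      have hadj : G.Adj a first := arc_adj hm hmem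
      show List.Chain _ ({a} : Finset V) [({a, first} : Finset V), {first}]
      refine List.Chain.cons (Or.inr ⟨⟨a, first, hadj, rfl, Or.inl rfl⟩, hmem⟩) ?_
      refine List.Chain.cons (Or.inl ⟨⟨a, first, hadj, rfl, Or.inr rfl⟩, ?_⟩) List.Chain.nil
      intro h2
      exact matching_not_both hm hadj.ne hmem (by rwa [Finset.pair_comm] at h2)
  | cons b t ih =>
      intro a hch
      rw [List.cons_append, List.Chain, List.chain_cons] at hch
      have hmem : ({a, b}, {a}) ∈ m := (mToF_eq_some hm).mp hch.1
      have hadj : G.Adj a b := arc_adj hm hmem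
      have hinner := ih hch.2
      obtain ⟨tl, htl⟩ := il_cons first b t
      rw [htl, List.tail_cons] at hinner
      show List.Chain _ ({a} : Finset V) ((({a, b} : Finset V) :: il first (b :: t)) ++ [({first} : Finset V)])
      rw [htl]
      refine List.Chain.cons (Or.inr ⟨⟨a, b, hadj, rfl, Or.inl rfl⟩, hmem⟩) ?_
      refine List.Chain.cons (Or.inl ⟨⟨a, b, hadj, rfl, Or.inr rfl⟩, ?_⟩) hinner
      intro h2
      exact matching_not_both hm hadj.ne hmem (by rwa [Finset.pair_comm] at h2)

lemma matching_mToF_good (hm : IsMatching (GraphArc G) m)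
    (hcyc : ∀ γ : List (Finset V), γ ∉ cyclesOf (GraphArc G) m) : Good G (mToF m) := by
  have hadjf : ∀ v w, mToF m v = some w → G.Adj v w := fun v w h =>
    arc_adj hm ((mToF_eq_some hm).mp h)
  have hne : ∀ v w, mToF m v = some w → v ≠ w := fun v w h => (hadjf v w h).ne
  have hnb : ∀ v w, mToF m v = some w → mToF m w = some v → False := by
    intro v w h1 h2
    exact matching_not_both hm (hne _ _ h1) ((mToF_eq_some hm).mp h1)
      ((mToF_eq_some hm).mp h2)
  refine ⟨hadjf, ?_⟩
  intro v htg
  obtain ⟨c, hc⟩ := transGen_isCycleList htg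
  obtain ⟨x0, rest, rfl⟩ : ∃ a t, c = a :: t := by
    cases c with
    | nil => exact absurd hc (by simp [IsCycleList])
    | cons a t => exact ⟨a, t, rfl⟩
  obtain ⟨hnd, hch⟩ := hc
  cases rest with
  | nil =>
      rw [List.nil_append, List.Chain, List.chain_cons] at hch
      exact hne _ _ hch.1 rfl
  | cons x1 rest' =>
      -- build the interleaved face cycle and contradict hcyc
      rw [List.cons_append, List.Chain, List.chain_cons] at hch
      have hchain2 : List.Chain (fun a b => mToF m a = some b) x0 ((x1 :: rest') ++ [x0]) := by
        rw [List.cons_append, List.Chain, List.chain_cons]; exact hch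
      have hx01 : x0 ≠ x1 := hne _ _ hch.1
      have hand := List.nodup_cons.mp hnd
      have hx0mem : x0 ∉ x1 :: rest' := hand.1
      -- the interleaved list
      have hγchain := il_chain hm (first := x0) hchain2
      have hγnodup : (il x0 (x0 :: x1 :: rest')).Nodup := by
        show (({x0} : Finset V) :: ({x0, x1} : Finset V) :: il x0 (x1 :: rest')).Nodup
        have hinner := il_nodup (first := x0) hne hnb hch.2 hand.2 hx0mem
        rw [List.nodup_cons, List.nodup_cons]
        refine ⟨?_, ?_, hinner⟩
        · intro hmem
          rcases List.mem_cons.mp hmem with heq | hmem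
          · have := congrArg Finset.card heq
            rw [Finset.card_singleton, Finset.card_pair hx01] at this; omega
          · rcases il_mem hch.2 _ hmem with ⟨x, hx, h⟩ | ⟨x, hx, y, hy, h⟩
            · exact hx0mem (Finset.singleton_injective h ▸ hx)
            · have := congrArg Finset.card h
              rw [Finset.card_singleton, Finset.card_pair (hne _ _ hy)] at this; omega
        · intro hmem
          rcases il_mem hch.2 _ hmem with ⟨x, hx, h⟩ | ⟨x, hx, y, hy, h⟩
          · have := congrArg Finset.card h
            rw [Finset.card_pair hx01, Finset.card_singleton] at this; omega
          · rcases pair_eq_cases h hx01 with ⟨h1, h2⟩ | ⟨h1, h2⟩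
            · exact hx0mem (h1 ▸ hx)
            · exact hnb _ _ hch.1 (by rw [← h1, ← h2] at hy; exact hy)
      refine hcyc (il x0 (x0 :: x1 :: rest')) ?_
      show IsCycleList (MStep (GraphArc G) m) (il x0 (x0 :: x1 :: rest'))
      show IsCycleList _ (({x0} : Finset V) :: ({x0, x1} : Finset V) :: il x0 (x1 :: rest'))
      exact ⟨hγnodup, hγchain⟩

lemma fToM_mToF (hm : IsMatching (GraphArc G) m) : fToM (mToF m) = m := by
  ext p
  rw [mem_fToM]
  constructor
  · rintro ⟨v, w, hw, rfl⟩
    exact (mToF_eq_some hm).mp hw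
  · intro hp
    obtain ⟨x, y, hadj, rfl⟩ := mem_norm hm hp
    exact ⟨x, y, (mToF_eq_some hm).mpr hp, rfl⟩

lemma mToF_fToM (hf : Good G f) : mToF (fToM f) = f := by
  have hm := good_fToM_isMatching hf
  funext v
  cases hv : f v with
  | none =>
      rw [mToF_eq_none]
      intro w hw
      obtain ⟨v', w', hw', heq⟩ := mem_fToM.mp hw
      have : v' = v := Finset.singleton_injective (congrArg Prod.snd heq).symm
      rw [this, hv] at hw'; exact absurd hw' (by simp)
  | some w =>
      exact (mToF_eq_some hm).mpr (mem_fToM.mpr ⟨v, w, hv, rfl⟩)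

lemma card_fToM (hf : Good G f) :
    (fToM f).card = (Finset.univ.filter fun v => (f v).isSome).card := by
  unfold fToM
  rw [Finset.card_biUnion]
  · rw [Finset.card_filter]
    apply Finset.sum_congr rfl
    intro v _
    cases hv : f v with
    | none => simp [Option.elim]
    | some w => simp [Option.elim]
  · intro x _ y _ hxy
    simp only [Finset.disjoint_left]
    intro p hp hq
    cases hx : f x with
    | none => rw [hx] at hp; simp [Option.elim] at hp
    | some w =>
        cases hy : f y with
        | none => rw [hy] at hq; simp [Option.elim] at hq
        | some w' =>
            rw [hx] at hp; rw [hy] at hq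
            simp only [Option.elim, Finset.mem_singleton] at hp hq
            rw [hp] at hq
            exact hxy (Finset.singleton_injective (congrArg Prod.snd hq))

def graphOf (f : V → Option V) : SimpleGraph V where
  Adj u v := u ≠ v ∧ (f u = some v ∨ f v = some u)
  symm := ⟨by rintro u v ⟨h1, h2⟩; exact ⟨h1.symm, h2.symm⟩⟩
  loopless := ⟨fun v h => h.1 rfl⟩

lemma graphOf_adj {u v : V} : (graphOf f).Adj u v ↔ u ≠ v ∧ (f u = some v ∨ f v = some u) :=
  Iff.rfl

lemma fstep_ne (hf : Good G f) {x y : V} (h : f x = some y) : x ≠ y := by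
  rintro rfl
  exact hf.2 x (Relation.TransGen.single h)

lemma graphOf_adj_of_step (hf : Good G f) {x y : V} (h : f x = some y) : (graphOf f).Adj x y :=
  ⟨fstep_ne hf h, Or.inl h⟩

lemma wf_flip (hf : Good G f) : WellFounded (fun a b : V => f b = some a) := by
  haveI : Finite V := Fintype.finite ‹_›
  set r : V → V → Prop := fun a b => f b = some a with hr
  haveI : IsIrrefl V (Relation.TransGen r) := by
    constructor
    intro a ha
    refine hf.2 a ?_
    have : Function.swap r = fun a b : V => f a = some b := rfl
    rw [← this]
    exact Relation.transGen_swap.mpr ha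
  have wfT : WellFounded (Relation.TransGen r) :=
    Finite.wellFounded_of_trans_of_irrefl _
  exact Subrelation.wf (fun h => Relation.TransGen.single h) wfT

lemma exists_rootspec (hf : Good G f) :
    ∀ v : V, ∃ w, Relation.ReflTransGen (fun a b => f a = some b) v w ∧ f w = none := by
  intro v
  induction v using (wf_flip hf).induction with
  | _ v ih =>
      cases hv : f v with
      | none => exact ⟨v, Relation.ReflTransGen.refl, hv⟩
      | some u =>
          obtain ⟨w, h1, h2⟩ := ih u hv
          exact ⟨w, Relation.ReflTransGen.head hv h1, h2⟩

lemma root_unique {v w w' : V}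
    (h1 : Relation.ReflTransGen (fun a b => f a = some b) v w) (hw : f w = none)
    (h2 : Relation.ReflTransGen (fun a b => f a = some b) v w') (hw' : f w' = none) :
    w = w' := by
  revert h2
  induction h1 using Relation.ReflTransGen.head_induction_on with
  | refl =>
      intro h2
      rcases Relation.ReflTransGen.cases_head h2 with rfl | ⟨u, hu, h3⟩
      · rfl
      · rw [hw] at hu; exact absurd hu (by simp)
  | head hstep htail ih =>
      intro h2
      rcases Relation.ReflTransGen.cases_head h2 with rfl | ⟨u, hu, h3⟩
      · rw [hw'] at hstep; exact absurd hstep (by simp)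
      · rw [hstep] at hu
        exact ih ((Option.some_inj.mp hu) ▸ h3)

noncomputable def rootD (f : V → Option V)
    (h : ∀ v : V, ∃ w, Relation.ReflTransGen (fun a b => f a = some b) v w ∧ f w = none) :
    V → V := fun v => (h v).choose

variable {h : ∀ v : V, ∃ w, Relation.ReflTransGen (fun a b => f a = some b) v w ∧ f w = none}

lemma rootD_reach (v : V) :
    Relation.ReflTransGen (fun a b => f a = some b) v (rootD f h v) := (h v).choose_spec.1

lemma rootD_none (v : V) : f (rootD f h v) = none := (h v).choose_spec.2

lemma rootD_step {v u : V} (hv : f v = some u) : rootD f h v = rootD f h u :=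
  root_unique (rootD_reach v) (rootD_none v)
    (Relation.ReflTransGen.head hv (rootD_reach u)) (rootD_none u)

lemma rootD_fix {v : V} (hv : f v = none) : rootD f h v = v :=
  (root_unique (rootD_reach v) (rootD_none v) Relation.ReflTransGen.refl hv)

lemma reach_graphOf (hf : Good G f) {v w : V}
    (hr : Relation.ReflTransGen (fun a b => f a = some b) v w) :
    (graphOf f).Reachable v w := by
  induction hr with
  | refl => exact Reachable.refl v
  | tail _ hstep ih => exact ih.trans (graphOf_adj_of_step hf hstep).reachable

lemma rootD_reachable (hf : Good G f) (v : V) : (graphOf f).Reachable v (rootD f h v) :=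
  reach_graphOf hf (rootD_reach v)

lemma rootD_const (hf : Good G f) {u v : V} (hr : (graphOf f).Reachable u v) :
    rootD f h u = rootD f h v := by
  rw [reachable_iff_reflTransGen] at hr
  induction hr with
  | refl => rfl
  | tail _ hadj ih =>
      rcases hadj.2 with hstep | hstep
      · exact ih.trans (rootD_step hstep)
      · exact ih.trans (rootD_step hstep).symm

def iterF (f : V → Option V) : ℕ → V → Option V
  | 0, v => some v
  | n + 1, v => (f v).bind (iterF f n)

lemma iterF_succ_some {n : ℕ} {v u : V} (h : f v = some u) :
    iterF f (n + 1) v = iterF f n u := by simp [iterF, h]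

lemma exists_iter_none (hf : Good G f) : ∀ v : V, ∃ n, iterF f n v = none := by
  intro v
  induction v using (wf_flip hf).induction with
  | _ v ih =>
      cases hv : f v with
      | none => exact ⟨1, by simp [iterF, hv]⟩
      | some u =>
          obtain ⟨n, hn⟩ := ih u hv
          exact ⟨n + 1, by rw [iterF_succ_some hv]; exact hn⟩

noncomputable def depthF (f : V → Option V) (h : ∀ v : V, ∃ n, iterF f n v = none) : V → ℕ :=
  fun v => Nat.find (h v)

variable {hh : ∀ v : V, ∃ n, iterF f n v = none}

lemma depthF_step {v u : V} (hv : f v = some u) :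
    depthF f hh v = depthF f hh u + 1 := by
  unfold depthF
  rw [Nat.find_eq_iff]
  constructor
  · rw [iterF_succ_some hv]; exact Nat.find_spec (hh u)
  · intro m hm
    cases m with
    | zero => simp [iterF]
    | succ k =>
        rw [iterF_succ_some hv]
        exact Nat.find_min (hh u) (by omega)

lemma adj_depth {u v : V} (hadj : (graphOf f).Adj u v) :
    depthF f hh u = depthF f hh v + 1 ∨ depthF f hh v = depthF f hh u + 1 := by
  rcases (graphOf_adj.mp hadj).2 with hstep | hstep
  · exact Or.inl (depthF_step hstep)
  · exact Or.inr (depthF_step hstep)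

lemma parent_unique_down {u v w : V} (h1 : (graphOf f).Adj u v) (h2 : (graphOf f).Adj u w)
    (hv : depthF f hh v < depthF f hh u) (hw : depthF f hh w < depthF f hh u) : v = w := by
  have hv1 : f u = some v := by
    rcases (graphOf_adj.mp h1).2 with hstep | hstep
    · exact hstep
    · rw [depthF_step (hh := hh) hstep] at hv; omega
  have hw1 : f u = some w := by
    rcases (graphOf_adj.mp h2).2 with hstep | hstep
    · exact hstep
    · rw [depthF_step (hh := hh) hstep] at hw; omega
  rw [hv1] at hw1
  exact Option.some_inj.mp hw1

lemma acyclic_graphOf (hf : Good G f) : (graphOf f).IsAcyclic := by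
  have hh : ∀ v : V, ∃ n, iterF f n v = none := exists_iter_none hf
  intro v c hc
  obtain ⟨u, hus, hmax⟩ : ∃ u ∈ c.support, ∀ w ∈ c.support, depthF f hh w ≤ depthF f hh u := by
    obtain ⟨u, hu, hmax⟩ := Finset.exists_max_image c.support.toFinset (depthF f hh)
      ⟨v, List.mem_toFinset.mpr c.start_mem_support⟩
    exact ⟨u, List.mem_toFinset.mp hu, fun w hw => hmax w (List.mem_toFinset.mpr hw)⟩
  set c' := c.rotate u hus with hc'def
  have hc' : c'.IsCycle := hc.rotate hus
  have hsupp : ∀ x ∈ c'.support, x ∈ c.support := by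
    intro x hx
    rcases SimpleGraph.Walk.mem_support_iff _ |>.mp hx with rfl | hx
    · exact hus
    · have hrot := SimpleGraph.Walk.support_rotate c u hus
      exact List.mem_of_mem_tail (hrot.mem_iff.mp hx)
  have hlen : 3 ≤ c'.length := hc'.three_le_length
  have hnn : ¬c'.Nil := by
    rw [SimpleGraph.Walk.not_nil_iff_lt_length]; omega
  obtain ⟨x, hux, q, hq⟩ := SimpleGraph.Walk.not_nil_iff.mp hnn
  have hnnr : ¬c'.reverse.Nil := by
    rw [SimpleGraph.Walk.not_nil_iff_lt_length, SimpleGraph.Walk.length_reverse]; omega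
  obtain ⟨y, huy, qr, hqr⟩ := SimpleGraph.Walk.not_nil_iff.mp hnnr
  -- x ≠ y via nodup edges
  have hedges : c'.edges = s(u, x) :: q.edges := by rw [hq]; simp
  have hedges_r : c'.edges.reverse = s(u, y) :: qr.edges := by
    rw [← SimpleGraph.Walk.edges_reverse, hqr]; simp
  have hnd : c'.edges.Nodup := hc'.edges_nodup
  have hxy : x ≠ y := by
    rintro rfl
    have hqne : q.edges ≠ [] := by
      have : q.edges.length = q.length := SimpleGraph.Walk.length_edges q
      have hq' : c'.length = q.length + 1 := by rw [hq]; simp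
      intro hemp
      rw [hemp] at this; simp at this; omega
    obtain ⟨e0, t, het⟩ : ∃ e0 t, q.edges.reverse = e0 :: t := by
      cases hqe : q.edges.reverse with
      | nil => exact absurd (by simpa using hqe) hqne
      | cons e0 t => exact ⟨e0, t, rfl⟩
    rw [hedges, List.reverse_cons, het] at hedges_r
    have he0 : e0 = s(u, x) := by
      have := congrArg List.head? hedges_r
      simpa using this
    have hmem : s(u, x) ∈ q.edges := by
      rw [← List.mem_reverse, het, he0]; simp
    rw [hedges, List.nodup_cons] at hnd
    exact hnd.1 hmem
  have hxs : x ∈ c'.support := by rw [hq]; simp [SimpleGraph.Walk.support_cons]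
  have hys : y ∈ c'.support := by
    have : y ∈ c'.reverse.support := by rw [hqr]; simp [SimpleGraph.Walk.support_cons]
    rwa [SimpleGraph.Walk.support_reverse, List.mem_reverse] at this
  have hdx : depthF f hh x < depthF f hh u := by
    have hle := hmax x (hsupp x hxs)
    rcases adj_depth (hh := hh) hux with h | h <;> omega
  have hdy : depthF f hh y < depthF f hh u := by
    have hle := hmax y (hsupp y hys)
    rcases adj_depth (hh := hh) huy with h | h <;> omega
  exact hxy (parent_unique_down hux huy hdx hdy)

lemma getVert_one_mem_support (p : F.Walk u v) : p.getVert 1 ∈ p.support := by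
  cases p with
  | nil => simp [SimpleGraph.Walk.getVert]
  | cons h q => simpa [SimpleGraph.Walk.support_cons, SimpleGraph.Walk.getVert_cons_succ]
      using Or.inr q.start_mem_support

/-- canonical path from `v` to its root. -/

noncomputable def pathTo (hr : ∀ v : V, F.Reachable v (r v)) (v : V) : F.Walk v (r v) :=
  ((hr v).some.toPath : F.Path v (r v)).1

lemma pathTo_isPath (hr : ∀ v : V, F.Reachable v (r v)) (v : V) : (pathTo hr v).IsPath :=
  ((hr v).some.toPath).2

lemma path_unique_to (hac : F.IsAcyclic) (hr : ∀ v : V, F.Reachable v (r v)) {v : V}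
    (p : F.Walk v (r v)) (hp : p.IsPath) : p = pathTo hr v := by
  have := hac.path_unique ⟨p, hp⟩ ((hr v).some.toPath)
  exact congrArg Subtype.val this

noncomputable def parD (F : SimpleGraph V) (r : V → V)
    (hr : ∀ v : V, F.Reachable v (r v)) : V → Option V :=
  fun v => if v = r v then none else some ((pathTo hr v).getVert 1)

variable {hr : ∀ v : V, F.Reachable v (r v)}

lemma parD_none_iff {v : V} : parD F r hr v = none ↔ v = r v := by
  unfold parD; split_ifs with h
  · exact iff_of_true rfl h
  · exact iff_of_false (by simp) h

lemma parD_eq_some {v u : V} (h : parD F r hr v = some u) :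
    v ≠ r v ∧ (pathTo hr v).getVert 1 = u := by
  unfold parD at h
  split_ifs at h with h'
  exact ⟨h', Option.some_inj.mp h⟩

lemma parD_spec {v : V} (h : v ≠ r v) : parD F r hr v = some ((pathTo hr v).getVert 1) := by
  unfold parD; rw [if_neg h]

lemma parD_adj {v u : V} (h : parD F r hr v = some u) : F.Adj v u := by
  obtain ⟨hne, hgv⟩ := parD_eq_some h
  have hlen : 0 < (pathTo hr v).length := by
    rcases Nat.eq_zero_or_pos (pathTo hr v).length with h0 | h0
    · exact absurd ((SimpleGraph.Walk.nil_iff_length_eq.mpr h0).eq) hne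
    · exact h0
  have := SimpleGraph.Walk.adj_getVert_succ (pathTo hr v) hlen
  rw [SimpleGraph.Walk.getVert_zero] at this
  rwa [hgv] at this

lemma dist_eq_pathTo_length (hac : F.IsAcyclic) (v : V) :
    F.dist v (r v) = (pathTo hr v).length := by
  refine le_antisymm (SimpleGraph.dist_le _) ?_
  obtain ⟨w0, hw0⟩ := (hr v).exists_walk_length_eq_dist
  have hbp : w0.bypass = pathTo hr v := path_unique_to hac hr _ w0.bypass_isPath
  rw [← hbp, ← hw0]
  exact SimpleGraph.Walk.length_bypass_le w0

lemma parD_dist_lt (hac : F.IsAcyclic)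
    (hconst : ∀ u v : V, F.Reachable u v → r u = r v) {v u : V}
    (h : parD F r hr v = some u) : F.dist u (r u) < F.dist v (r v) := by
  obtain ⟨hne, hgv⟩ := parD_eq_some h
  have hnn : ¬(pathTo hr v).Nil := SimpleGraph.Walk.not_nil_of_ne hne
  obtain ⟨x, hvx, q, hq⟩ := SimpleGraph.Walk.not_nil_iff.mp hnn
  have hxu : x = u := by
    have : (pathTo hr v).getVert 1 = x := by
      rw [hq, SimpleGraph.Walk.getVert_cons_succ, SimpleGraph.Walk.getVert_zero]
    rw [this] at hgv; exact hgv
  have hru : r x = r v := hconst x v hvx.symm.reachable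
  rw [← hxu]
  have hqlen : q.length + 1 = (pathTo hr v).length := by rw [hq]; simp
  have hqd : F.dist x (r v) ≤ q.length := SimpleGraph.dist_le q
  rw [hru, dist_eq_pathTo_length (hr := hr) hac v]
  omega

lemma parD_good (hle : F ≤ G) (hac : F.IsAcyclic)
    (hconst : ∀ u v : V, F.Reachable u v → r u = r v) :
    (∀ v w, parD F r hr v = some w → G.Adj v w) ∧
      Irreflexive (Relation.TransGen (fun a b => parD F r hr a = some b)) := by
  constructor
  · intro v w h
    exact hle (parD_adj h)
  · intro v htg
    have hdec : ∀ a b : V, Relation.TransGen (fun a b => parD F r hr a = some b) a b →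
        F.dist b (r b) < F.dist a (r a) := by
      intro a b htg'
      induction htg' with
      | single h => exact parD_dist_lt hac hconst h
      | tail _ h ih => exact lt_trans (parD_dist_lt hac hconst h) ih
    exact absurd (hdec v v htg) (lt_irrefl _)

lemma path_first_step (hf : Good G f) :
    ∀ (n : ℕ) (v : V) (p : (graphOf f).Walk v (rootD f h v)), p.length = n → p.IsPath →
      v ≠ rootD f h v → f v = some (p.getVert 1) := by
  intro n
  induction n using Nat.strong_induction_on with
  | _ n ih =>
      intro v p hlen hp hne
      have hnn : ¬p.Nil := SimpleGraph.Walk.not_nil_of_ne hne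
      obtain ⟨x, hvx, q, hq⟩ := SimpleGraph.Walk.not_nil_iff.mp hnn
      have hgv1 : p.getVert 1 = x := by
        rw [hq, SimpleGraph.Walk.getVert_cons_succ, SimpleGraph.Walk.getVert_zero]
      rcases (graphOf_adj.mp hvx).2 with hstep | hstep
      · rw [hgv1]; exact hstep
      · -- f x = some v : impossible
        exfalso
        have hrx : rootD f h x = rootD f h v := rootD_step hstep
        have hxne : x ≠ rootD f h x := by
          intro hx
          have := rootD_none (h := h) x
          rw [← hx, hstep] at this
          exact absurd this (by simp)
        set q' : (graphOf f).Walk x (rootD f h x) := q.copy rfl hrx.symm with hq'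
        have hq'path : q'.IsPath := by
          rw [hq']; rw [SimpleGraph.Walk.isPath_copy]
          exact ((SimpleGraph.Walk.cons_isPath_iff _ _).mp (hq ▸ hp)).1
        have hq'len : q'.length < n := by
          rw [hq']; rw [SimpleGraph.Walk.length_copy]
          rw [hq] at hlen; simp at hlen; omega
        have := ih q'.length hq'len x q' rfl hq'path hxne
        rw [hstep] at this
        have hqv : q'.getVert 1 = v := (Option.some_inj.mp this).symm
        have hvmem : v ∈ q.support := by
          have := getVert_one_mem_support q'
          rw [hqv] at this
          rw [hq'] at this
          rwa [SimpleGraph.Walk.support_copy] at this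
        exact ((SimpleGraph.Walk.cons_isPath_iff _ _).mp (hq ▸ hp)).2 hvmem

lemma parD_graphOf (hf : Good G f)
    (hreach : ∀ v : V, (graphOf f).Reachable v (rootD f h v)) :
    parD (graphOf f) (rootD f h) hreach = f := by
  funext v
  cases hv : f v with
  | none =>
      rw [parD_none_iff]
      exact (rootD_fix hv).symm
  | some u =>
      have hne : v ≠ rootD f h v := by
        intro hx
        have := rootD_none (h := h) v
        rw [← hx, hv] at this
        exact absurd this (by simp)
      rw [parD_spec hne]
      have := path_first_step hf (h := h) (pathTo hreach v).length v (pathTo hreach v) rfl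
        (pathTo_isPath hreach v) hne
      rw [hv] at this
      exact (Option.some_inj.mp this) ▸ rfl

lemma path_first_edge {a c : V} {b : V} (p : F.Walk a b) (hp : p.IsPath)
    (hmem : s(a, c) ∈ p.edges) : p.getVert 1 = c := by
  cases p with
  | nil => simp at hmem
  | cons hax q =>
      rw [SimpleGraph.Walk.edges_cons] at hmem
      rcases List.mem_cons.mp hmem with heq | hmem
      · have := Sym2.congr_right.mp heq
        rw [SimpleGraph.Walk.getVert_cons_succ, SimpleGraph.Walk.getVert_zero]
        exact this.symm
      · exfalso
        have : a ∈ q.support := SimpleGraph.Walk.fst_mem_support_of_mem_edges q hmem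
        exact ((SimpleGraph.Walk.cons_isPath_iff _ _).mp hp).2 this

lemma graphOf_parD (hle : F ≤ G) (hac : F.IsAcyclic)
    (hconst : ∀ u v : V, F.Reachable u v → r u = r v) :
    graphOf (parD F r hr) = F := by
  ext u v
  rw [graphOf_adj]
  constructor
  · rintro ⟨hne, hor | hor⟩
    · exact parD_adj hor
    · exact (parD_adj hor).symm
  · intro hFadj
    refine ⟨hFadj.ne, ?_⟩
    have hρv : r v = r u := hconst v u hFadj.symm.reachable
    by_cases he_u : s(u, v) ∈ (pathTo hr u).edges
    · -- the path from u starts with the edge uv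
      have hne : u ≠ r u := by
        intro hx
        have h0 : F.dist u (r u) = 0 := by rw [← hx]; exact SimpleGraph.dist_self
        rw [dist_eq_pathTo_length hac u] at h0
        have : (pathTo hr u).edges.length = 0 := by
          rw [SimpleGraph.Walk.length_edges]; exact h0
        rw [List.length_eq_zero_iff] at this
        rw [this] at he_u; simp at he_u
      left
      rw [parD_spec hne]
      rw [path_first_edge (pathTo hr u) (pathTo_isPath hr u) he_u]
    · by_cases he_v : s(u, v) ∈ (pathTo hr v).edges
      · have hne : v ≠ r v := by
          intro hx
          have h0 : F.dist v (r v) = 0 := by rw [← hx]; exact SimpleGraph.dist_self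
          rw [dist_eq_pathTo_length hac v] at h0
          have : (pathTo hr v).edges.length = 0 := by
            rw [SimpleGraph.Walk.length_edges]; exact h0
          rw [List.length_eq_zero_iff] at this
          rw [this] at he_v; simp at he_v
        right
        rw [parD_spec hne]
        rw [path_first_edge (pathTo hr v) (pathTo_isPath hr v) (by rwa [Sym2.eq_swap] at he_v)]
      · -- contradiction with the bridge property
        exfalso
        have hbr := (SimpleGraph.isAcyclic_iff_forall_adj_isBridge.mp hac) hFadj
        rw [SimpleGraph.isBridge_iff] at hbr
        apply hbr
        rw [SimpleGraph.reachable_delete_edges_iff_exists_walk]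
        refine ⟨(pathTo hr u).append ((pathTo hr v).copy rfl hρv).reverse, ?_⟩
        rw [SimpleGraph.Walk.edges_append, List.mem_append]
        push_neg
        refine ⟨he_u, ?_⟩
        rw [SimpleGraph.Walk.edges_reverse, List.mem_reverse, SimpleGraph.Walk.edges_copy]
        exact he_v

lemma rootD_parD (hle : F ≤ G) (hac : F.IsAcyclic)
    (hconst : ∀ u v : V, F.Reachable u v → r u = r v)
    (hgood : Good G (parD F r hr))
    (h : ∀ v : V, ∃ w, Relation.ReflTransGen (fun a b => parD F r hr a = some b) v w ∧
        parD F r hr w = none) :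
    rootD (parD F r hr) h = r := by
  funext v
  induction v using (wf_flip hgood).induction with
  | _ v ih =>
      cases hv : parD F r hr v with
      | none =>
          rw [rootD_fix hv]
          exact parD_none_iff.mp hv
      | some u =>
          rw [rootD_step hv, ih u hv]
          exact (hconst u v (parD_adj hv).symm.reachable)

lemma graphOf_le (hf : Good G f) : graphOf f ≤ G := by
  intro u v huv
  rcases (graphOf_adj.mp huv).2 with hstep | hstep
  · exact hf.1 _ _ hstep
  · exact (hf.1 _ _ hstep).symm

lemma rootD_congr {g g' : V → Option V} (hgg : g = g')
    {h1 : ∀ v : V, ∃ w, Relation.ReflTransGen (fun a b => g a = some b) v w ∧ g w = none}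
    {h2 : ∀ v : V, ∃ w, Relation.ReflTransGen (fun a b => g' a = some b) v w ∧ g' w = none} :
    rootD g h1 = rootD g' h2 := by
  subst hgg; rfl

lemma edgeSet_ncard (hf : Good G f) :
    (graphOf f).edgeSet.ncard = (Finset.univ.filter fun v => (f v).isSome).card := by
  classical
  set g : V → Sym2 V := fun v => s(v, (f v).getD v) with hg
  have himg : (graphOf f).edgeSet = g '' {v : V | (f v).isSome} := by
    ext e
    induction e using Sym2.ind with
    | _ a b =>
        simp only [SimpleGraph.mem_edgeSet, Set.mem_image, Set.mem_setOf_eq]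
        constructor
        · intro hadj
          rcases (graphOf_adj.mp hadj).2 with hstep | hstep
          · exact ⟨a, by rw [hstep]; rfl, by rw [hg]; simp [hstep]⟩
          · refine ⟨b, by rw [hstep]; rfl, ?_⟩
            rw [hg]; simp only [hstep, Option.getD_some]
            exact Sym2.eq_swap
        · rintro ⟨v, hsome, hve⟩
          obtain ⟨w, hw⟩ := Option.isSome_iff_exists.mp hsome
          rw [hg] at hve
          simp only [hw, Option.getD_some] at hve
          have hadj : (graphOf f).Adj v w := ⟨fstep_ne hf hw, Or.inl hw⟩
          have hmem : s(v, w) ∈ (graphOf f).edgeSet := hadj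
          rw [hve] at hmem
          exact hmem
  rw [himg]
  rw [Set.ncard_image_of_injOn]
  · have : {v : V | (f v).isSome} = ↑(Finset.univ.filter fun v => (f v).isSome) := by
      ext v; simp
    rw [this, Set.ncard_coe_finset]
  · intro a ha b hb hab
    obtain ⟨wa, hwa⟩ := Option.isSome_iff_exists.mp ha
    obtain ⟨wb, hwb⟩ := Option.isSome_iff_exists.mp hb
    rw [hg] at hab
    simp only [hwa, hwb, Option.getD_some] at hab
    rw [Sym2.eq_iff] at hab
    rcases hab with ⟨h1, h2⟩ | ⟨h1, h2⟩
    · exact h1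
    · have hab1 : f a = some b := by rw [hwa, h2]
      have hab2 : f b = some a := by rw [hwb, ← h1]
      have hloop : Relation.TransGen (fun a b => f a = some b) a a :=
        Relation.TransGen.head hab1 (Relation.TransGen.single hab2)
      exact absurd hloop (hf.2 _)

end CJ

open CJ in
/-- Chari--Joswig -/
theorem morse_matchings_equiv_rooted_spanning_forests
    {V : Type*} [Fintype V] [DecidableEq V] (G : SimpleGraph V) :
    ∃ e : {m : Finset (Finset V × Finset V) //
              IsMatching (GraphArc G) m ∧
              ∀ γ : List (Finset V), γ ∉ cyclesOf (GraphArc G) m} ≃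
          {p : SimpleGraph V × (V → V) //
              p.1 ≤ G ∧ p.1.IsAcyclic ∧
              (∀ v : V, p.1.Reachable v (p.2 v)) ∧
              (∀ u v : V, p.1.Reachable u v → p.2 u = p.2 v)},
      ∀ m, (m.val).card = ((e m).val.1.edgeSet.ncard) := by
  classical
  -- abbreviations for the two subtypes
  set L := {m : Finset (Finset V × Finset V) //
      IsMatching (GraphArc G) m ∧
      ∀ γ : List (Finset V), γ ∉ cyclesOf (GraphArc G) m} with hL
  set R := {p : SimpleGraph V × (V → V) //
      p.1 ≤ G ∧ p.1.IsAcyclic ∧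
      (∀ v : V, p.1.Reachable v (p.2 v)) ∧
      (∀ u v : V, p.1.Reachable u v → p.2 u = p.2 v)} with hR
  have keyL : ∀ x : L, Good G (mToF x.1) := fun x => matching_mToF_good x.2.1 x.2.2
  have keyR : ∀ y : R, Good G (parD y.1.1 y.1.2 y.2.2.2.1) := fun y =>
    parD_good y.2.1 y.2.2.1 y.2.2.2.2
  -- the forward map
  let toF : L → R := fun x =>
    ⟨(graphOf (mToF x.1), rootD (mToF x.1) (exists_rootspec (keyL x))),
      graphOf_le (keyL x), acyclic_graphOf (keyL x),
      fun v => rootD_reachable (keyL x) v, fun u v hr => rootD_const (keyL x) hr⟩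
  -- the backward map
  let toL : R → L := fun y =>
    ⟨fToM (parD y.1.1 y.1.2 y.2.2.2.1),
      good_fToM_isMatching (keyR y), good_fToM_nocycles (keyR y)⟩
  have hli : Function.LeftInverse toL toF := by
    intro x
    apply Subtype.ext
    show fToM (parD (graphOf (mToF x.1)) (rootD (mToF x.1) (exists_rootspec (keyL x))) _) = x.1
    rw [parD_graphOf (keyL x)]
    exact fToM_mToF x.2.1
  have hri : Function.RightInverse toL toF := by
    intro y
    apply Subtype.ext
    have hfe : mToF (fToM (parD y.1.1 y.1.2 y.2.2.2.1)) = parD y.1.1 y.1.2 y.2.2.2.1 :=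
      mToF_fToM (keyR y)
    show (graphOf (mToF (fToM (parD y.1.1 y.1.2 y.2.2.2.1))),
          rootD (mToF (fToM (parD y.1.1 y.1.2 y.2.2.2.1))) _) = y.1
    have h1 : graphOf (mToF (fToM (parD y.1.1 y.1.2 y.2.2.2.1))) = y.1.1 := by
      rw [congrArg graphOf hfe]
      exact graphOf_parD y.2.1 y.2.2.1 y.2.2.2.2
    have h2 : rootD (mToF (fToM (parD y.1.1 y.1.2 y.2.2.2.1)))
        (exists_rootspec (keyL (toL y))) = y.1.2 := by
      rw [rootD_congr hfe (h2 := exists_rootspec (keyR y))]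
      exact rootD_parD y.2.1 y.2.2.1 y.2.2.2.2 (keyR y) (exists_rootspec (keyR y))
    exact Prod.ext h1 h2
  refine ⟨⟨toF, toL, hli, hri⟩, ?_⟩
  intro x
  show x.1.card = (graphOf (mToF x.1)).edgeSet.ncard
  rw [edgeSet_ncard (keyL x)]
  conv_lhs => rw [← fToM_mToF x.2.1]
  exact card_fToM (keyL x)
end
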